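/- arXiv:2506.09005 — 8 statements merged into one kernel-verified Lean document; each statement's English description precedes it below -/
import Mathlib

section
/- Let m > 1 be a real number, let 0 < a < b, and let Ω = {x ∈ ℝ² : a < |x| < b}. Every smooth function u : ℝ² → ℝ whose closed support is a compact subset of Ω satisfies the identity ∫_Ω ((𝓛_m u)(x))² dx = ∫_Ω (Δu(x) + (m²−1)·u(x)/|x|²)² dx + 4(m²−1)·∫_Ω ((x·∇u(x))/|x|² − u(x)/|x|²)² dx. -/
open MeasureTheory

noncomputable section

/-- The open annulus `{x ∈ ℝ² : a < |x| < b}`, with `ℝ²` identified with `ℂ`. -/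
def ann (a b : ℝ) : Set ℂ := {z : ℂ | a < ‖z‖ ∧ ‖z‖ < b}

/-- First partial derivative `∂₁u` of a function on `ℝ² ≅ ℂ`. -/
def pd1 (u : ℂ → ℝ) (z : ℂ) : ℝ := fderiv ℝ u z 1

/-- Second partial derivative `∂₂u` of a function on `ℝ² ≅ ℂ`. -/
def pd2 (u : ℂ → ℝ) (z : ℂ) : ℝ := fderiv ℝ u z Complex.I

/-- The Euclidean Laplacian `Δu = ∂₁∂₁u + ∂₂∂₂u`. -/
def lap (u : ℂ → ℝ) (z : ℂ) : ℝ := pd1 (pd1 u) z + pd2 (pd2 u) z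

/-- The operator `𝓛_m u = Δu + 2(m−1)(x·∇u)/|x|² + (m−1)²u/|x|²`. -/
def Lop (m : ℝ) (u : ℂ → ℝ) (z : ℂ) : ℝ :=
  lap u z + 2 * (m - 1) * (z.re * pd1 u z + z.im * pd2 u z) / ‖z‖ ^ 2
    + (m - 1) ^ 2 * u z / ‖z‖ ^ 2

/-! ### Auxiliary material for the proof -/

/-- First component of the auxiliary vector field whose divergence realizes the
difference of the two sides of the identity. -/
def F1 (m : ℝ) (u : ℂ → ℝ) : ℂ → ℝ := fun z =>
  (4*(m-1)) * ((z.re * pd1 u z + z.im * pd2 u z - u z) * (z.re*z.re+z.im*z.im)⁻¹ * pd1 u z)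
  - (2*(m-1)) * ((pd1 u z*pd1 u z + pd2 u z*pd2 u z) * z.re * (z.re*z.re+z.im*z.im)⁻¹)
  + (2*(m-1)*((m-1)^2+2*(m-1)+2)) *
      (u z*u z * z.re * ((z.re*z.re+z.im*z.im)⁻¹*(z.re*z.re+z.im*z.im)⁻¹))

/-- Second component of the auxiliary vector field. -/
def F2 (m : ℝ) (u : ℂ → ℝ) : ℂ → ℝ := fun z =>
  (4*(m-1)) * ((z.re * pd1 u z + z.im * pd2 u z - u z) * (z.re*z.re+z.im*z.im)⁻¹ * pd2 u z)
  - (2*(m-1)) * ((pd1 u z*pd1 u z + pd2 u z*pd2 u z) * z.im * (z.re*z.re+z.im*z.im)⁻¹)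
  + (2*(m-1)*((m-1)^2+2*(m-1)+2)) *
      (u z*u z * z.im * ((z.re*z.re+z.im*z.im)⁻¹*(z.re*z.re+z.im*z.im)⁻¹))

namespace Statement1Aux

variable {u : ℂ → ℝ}

lemma hD (hu : ContDiff ℝ (⊤:ℕ∞) u) (z : ℂ) :
    HasFDerivAt (fderiv ℝ u) (fderiv ℝ (fderiv ℝ u) z) z :=
  ((hu.fderiv_right (m := (⊤:ℕ∞)) (by simp)).differentiable (by simp)).differentiableAt.hasFDerivAt

lemma hasF_pd1 (hu : ContDiff ℝ (⊤:ℕ∞) u) (z : ℂ) :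
    HasFDerivAt (pd1 u) ((fderiv ℝ (fderiv ℝ u) z).flip 1) z := by
  have h := (hD hu z).clm_apply (hasFDerivAt_const (1:ℂ) z)
  have h2 : pd1 u = fun y => fderiv ℝ u y 1 := rfl
  rw [h2]
  simpa using h

lemma hasF_pd2 (hu : ContDiff ℝ (⊤:ℕ∞) u) (z : ℂ) :
    HasFDerivAt (pd2 u) ((fderiv ℝ (fderiv ℝ u) z).flip Complex.I) z := by
  have h := (hD hu z).clm_apply (hasFDerivAt_const (Complex.I) z)
  have h2 : pd2 u = fun y => fderiv ℝ u y Complex.I := rfl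
  rw [h2]
  simpa using h

lemma contDiff_pd1 (hu : ContDiff ℝ (⊤:ℕ∞) u) : ContDiff ℝ (⊤:ℕ∞) (pd1 u) :=
  (hu.fderiv_right (m := (⊤:ℕ∞)) (by simp)).clm_apply contDiff_const

lemma contDiff_pd2 (hu : ContDiff ℝ (⊤:ℕ∞) u) : ContDiff ℝ (⊤:ℕ∞) (pd2 u) :=
  (hu.fderiv_right (m := (⊤:ℕ∞)) (by simp)).clm_apply contDiff_const

lemma continuous_lap (hu : ContDiff ℝ (⊤:ℕ∞) u) : Continuous (lap u) := by
  have h1 := (contDiff_pd1 (contDiff_pd1 hu)).continuous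
  have h2 := (contDiff_pd2 (contDiff_pd2 hu)).continuous
  exact h1.add h2

set_option maxHeartbeats 4000000 in
/-- The key pointwise identity: the difference between `(𝓛_m u)²` and the two squares on the
right-hand side is the divergence of the field `(F1, F2)`. -/
lemma div_identity (m : ℝ) (hu : ContDiff ℝ (⊤:ℕ∞) u) (z : ℂ)
    (hn : z.re*z.re+z.im*z.im ≠ 0) :
    Lop m u z ^ 2 =
      (lap u z + (m ^ 2 - 1) * u z / ‖z‖ ^ 2) ^ 2 +
        4 * (m ^ 2 - 1) *
          ((z.re * pd1 u z + z.im * pd2 u z) / ‖z‖ ^ 2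
            - u z / ‖z‖ ^ 2) ^ 2
      + (pd1 (F1 m u) z + pd2 (F2 m u) z) := by
  have hre : HasFDerivAt (fun w : ℂ => w.re) Complex.reCLM z := Complex.reCLM.hasFDerivAt
  have him : HasFDerivAt (fun w : ℂ => w.im) Complex.imCLM z := Complex.imCLM.hasFDerivAt
  have hu' : HasFDerivAt u (fderiv ℝ u z) z :=
    (hu.differentiable (by simp)).differentiableAt.hasFDerivAt
  have hp := hasF_pd1 hu z
  have hq := hasF_pd2 hu z
  have hN := ((hre.mul hre).add (him.mul him))
  have hNi := (hasDerivAt_inv hn).comp_hasFDerivAt z hN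
  have hW := ((hre.mul hp).add (him.mul hq)).sub hu'
  have hF1 : HasFDerivAt (F1 m u) _ z :=
    ((((hW.mul hNi).mul hp).const_mul (4*(m-1))).sub
      (((((hp.mul hp).add (hq.mul hq)).mul hre).mul hNi).const_mul (2*(m-1)))).add
      ((((hu'.mul hu').mul hre).mul (hNi.mul hNi)).const_mul (2*(m-1)*((m-1)^2+2*(m-1)+2)))
  have hF2 : HasFDerivAt (F2 m u) _ z :=
    ((((hW.mul hNi).mul hq).const_mul (4*(m-1))).sub
      (((((hp.mul hp).add (hq.mul hq)).mul him).mul hNi).const_mul (2*(m-1)))).add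
      ((((hu'.mul hu').mul him).mul (hNi.mul hNi)).const_mul (2*(m-1)*((m-1)^2+2*(m-1)+2)))
  have habs : (‖z‖:ℝ)^2 = z.re*z.re+z.im*z.im := by
    rw [Complex.sq_norm, Complex.normSq_apply]
  have hsym : (fderiv ℝ (fderiv ℝ u) z) Complex.I 1 = (fderiv ℝ (fderiv ℝ u) z) 1 Complex.I :=
    second_derivative_symmetric
      (fun y => (hu.differentiable (by simp)).differentiableAt.hasFDerivAt) (hD hu z) _ _
  have e11 : pd1 (pd1 u) z = fderiv ℝ (fderiv ℝ u) z 1 1 := by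
    rw [pd1, hp.fderiv]; simp
  have e22 : pd2 (pd2 u) z = fderiv ℝ (fderiv ℝ u) z Complex.I Complex.I := by
    rw [pd2, hq.fderiv]; simp
  rw [Lop, lap, habs, e11, e22]
  simp only [pd1, pd2]
  rw [hF1.fderiv, hF2.fderiv]
  simp only [pd1, pd2, ContinuousLinearMap.add_apply, ContinuousLinearMap.coe_sub', Pi.sub_apply,
    ContinuousLinearMap.coe_smul', Pi.smul_apply, Function.comp_apply,
    ContinuousLinearMap.smul_apply, ContinuousLinearMap.comp_apply,
    ContinuousLinearMap.flip_apply, ContinuousLinearMap.zero_apply, smul_eq_mul,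
    Complex.reCLM_apply, Complex.imCLM_apply, Complex.one_re, Complex.one_im,
    Complex.I_re, Complex.I_im, Pi.add_apply, Pi.mul_apply]
  rw [hsym]
  set X := z.re; set Y := z.im; set U := u z
  set P := fderiv ℝ u z 1; set Q := fderiv ℝ u z Complex.I
  set A := fderiv ℝ (fderiv ℝ u) z 1 1
  set B := fderiv ℝ (fderiv ℝ u) z 1 Complex.I
  set D := fderiv ℝ (fderiv ℝ u) z Complex.I Complex.I
  have hn2 : X^2+Y^2 ≠ 0 := by rw [sq, sq]; exact hn
  field_simp
  ring

/-- Vanishing of a derivative-type integral for differentiable compactly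
supported functions. -/
lemma int_fderiv_zero {g : ℂ → ℝ} (v : ℂ)
    (hg : Differentiable ℝ g)
    (hgi : Integrable g) (hg'i : Integrable (fun x => fderiv ℝ g x v)) :
    ∫ x : ℂ, fderiv ℝ g x v = 0 := by
  have h := integral_bilinear_hasFDerivAt_right_eq_neg_left_of_integrable
    (μ := (volume : Measure ℂ)) (B := ContinuousLinearMap.mul ℝ ℝ)
    (f := fun _ => (1:ℝ)) (f' := fun _ => (0 : ℂ →L[ℝ] ℝ)) (g := g)
    (g' := fun x => fderiv ℝ g x) (v := v)
    (by simpa using (integrable_zero ℂ ℝ (volume : Measure ℂ)))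
    (by simpa using hg'i) (by simpa using hgi)
    (fun x _ => hasFDerivAt_const _ _) (fun x _ => (hg x).hasFDerivAt)
  simpa using h

/-- Gluing continuity: continuous away from `0`, and vanishing on the complement of a
closed set avoiding `0`. -/
lemma cont_glue {f : ℂ → ℝ} {S : Set ℂ} (hS : IsClosed S) (h0 : (0:ℂ) ∉ S)
    (h1 : ∀ z : ℂ, z ≠ 0 → ContinuousAt f z) (h2 : ∀ z ∉ S, f z = 0) : Continuous f := by
  rw [continuous_iff_continuousAt]
  intro z
  by_cases hz : z = 0
  · subst hz
    have hmem : Sᶜ ∈ nhds (0:ℂ) := hS.isOpen_compl.mem_nhds h0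
    have hev : (fun _ : ℂ => (0:ℝ)) =ᶠ[nhds (0:ℂ)] f :=
      Filter.eventuallyEq_of_mem hmem (fun w hw => (h2 w hw).symm)
    exact continuousAt_const.congr hev
  · exact h1 z hz

end Statement1Aux

open Statement1Aux in
set_option maxHeartbeats 8000000 in
/-- The identity `∫ (𝓛_m u)² = ∫ (Δu + (m²−1)u/|x|²)²
+ 4(m²−1) ∫ ((x·∇u)/|x|² − u/|x|²)²` for compactly supported smooth `u` on the annulus. -/
theorem statement1 (m : ℝ) (hm : 1 < m) (a b : ℝ) (ha : 0 < a) (hab : a < b)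
    (u : ℂ → ℝ) (hu : ContDiff ℝ (⊤ : ℕ∞) u) (hcs : IsCompact (tsupport u))
    (hsupp : tsupport u ⊆ ann a b) :
    (∫ z in ann a b, Lop m u z ^ 2) =
      (∫ z in ann a b, (lap u z + (m ^ 2 - 1) * u z / ‖z‖ ^ 2) ^ 2) +
        4 * (m ^ 2 - 1) *
          (∫ z in ann a b,
            ((z.re * pd1 u z + z.im * pd2 u z) / ‖z‖ ^ 2
              - u z / ‖z‖ ^ 2) ^ 2) := by
  classical
  set S : Set ℂ := tsupport u with hS_def
  have hSclosed : IsClosed S := isClosed_tsupport u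
  have h0ann : (0:ℂ) ∉ ann a b := by
    intro h
    simp only [ann, Set.mem_setOf_eq, norm_zero] at h
    exact absurd h.1 (not_lt.mpr ha.le)
  have h0S : (0:ℂ) ∉ S := fun h => h0ann (hsupp h)
  -- basic vanishing facts outside S
  have hu0 : ∀ z ∉ S, u z = 0 := fun z hz => image_eq_zero_of_notMem_tsupport hz
  have hev0 : ∀ z ∉ S, u =ᶠ[nhds z] fun _ => 0 := by
    intro z hz
    exact Filter.eventuallyEq_of_mem (hSclosed.isOpen_compl.mem_nhds hz)
      (fun w hw => hu0 w hw)
  have hfd0 : ∀ z ∉ S, fderiv ℝ u z = 0 := by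
    intro z hz
    rw [(hev0 z hz).fderiv_eq]
    exact fderiv_const_apply 0
  have hp0 : ∀ z ∉ S, pd1 u z = 0 := by
    intro z hz; rw [pd1, hfd0 z hz]; rfl
  have hq0 : ∀ z ∉ S, pd2 u z = 0 := by
    intro z hz; rw [pd2, hfd0 z hz]; rfl
  have hfdfd0 : ∀ z ∉ S, fderiv ℝ (fderiv ℝ u) z = 0 := by
    intro z hz
    have hev : fderiv ℝ u =ᶠ[nhds z] fun _ => (0 : ℂ →L[ℝ] ℝ) :=
      Filter.eventuallyEq_of_mem (hSclosed.isOpen_compl.mem_nhds hz)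
        (fun w hw => hfd0 w hw)
    rw [hev.fderiv_eq]
    exact fderiv_const_apply 0
  have hpp0 : ∀ z ∉ S, pd1 (pd1 u) z = 0 := by
    intro z hz
    rw [pd1, (hasF_pd1 hu z).fderiv]
    simp [hfdfd0 z hz]
  have hqq0 : ∀ z ∉ S, pd2 (pd2 u) z = 0 := by
    intro z hz
    rw [pd2, (hasF_pd2 hu z).fderiv]
    simp [hfdfd0 z hz]
  have hlap0 : ∀ z ∉ S, lap u z = 0 := by
    intro z hz; rw [lap, hpp0 z hz, hqq0 z hz]; ring
  -- vanishing of F1, F2 outside S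
  have hF10 : ∀ z ∉ S, F1 m u z = 0 := by
    intro z hz; rw [F1, hu0 z hz, hp0 z hz, hq0 z hz]; ring
  have hF20 : ∀ z ∉ S, F2 m u z = 0 := by
    intro z hz; rw [F2, hu0 z hz, hp0 z hz, hq0 z hz]; ring
  -- nonvanishing of the denominator away from 0
  have hnz : ∀ z : ℂ, z ≠ 0 → z.re*z.re+z.im*z.im ≠ 0 := by
    intro z hz
    have := Complex.normSq_pos.mpr hz
    rw [Complex.normSq_apply] at this
    exact ne_of_gt this
  -- differentiability of F1 and F2 everywhere, with concrete derivative at z ≠ 0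
  have hdiffF1 : Differentiable ℝ (F1 m u) := by
    intro z
    by_cases hz : z = 0
    · subst hz
      have hev : (fun _ : ℂ => (0:ℝ)) =ᶠ[nhds (0:ℂ)] F1 m u :=
        Filter.eventuallyEq_of_mem (hSclosed.isOpen_compl.mem_nhds h0S)
          (fun w hw => (hF10 w hw).symm)
      exact (differentiableAt_const (0:ℝ)).congr_of_eventuallyEq hev.symm
    · have hn := hnz z hz
      have hre : HasFDerivAt (fun w : ℂ => w.re) Complex.reCLM z := Complex.reCLM.hasFDerivAt
      have him : HasFDerivAt (fun w : ℂ => w.im) Complex.imCLM z := Complex.imCLM.hasFDerivAt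
      have hu' : HasFDerivAt u (fderiv ℝ u z) z :=
        (hu.differentiable (by simp)).differentiableAt.hasFDerivAt
      have hp := hasF_pd1 hu z
      have hq := hasF_pd2 hu z
      have hN := ((hre.mul hre).add (him.mul him))
      have hNi := (hasDerivAt_inv hn).comp_hasFDerivAt z hN
      have hW := ((hre.mul hp).add (him.mul hq)).sub hu'
      have hF1 : HasFDerivAt (F1 m u) _ z :=
        ((((hW.mul hNi).mul hp).const_mul (4*(m-1))).sub
          (((((hp.mul hp).add (hq.mul hq)).mul hre).mul hNi).const_mul (2*(m-1)))).add
          ((((hu'.mul hu').mul hre).mul (hNi.mul hNi)).const_mul (2*(m-1)*((m-1)^2+2*(m-1)+2)))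
      exact hF1.differentiableAt
  have hdiffF2 : Differentiable ℝ (F2 m u) := by
    intro z
    by_cases hz : z = 0
    · subst hz
      have hev : (fun _ : ℂ => (0:ℝ)) =ᶠ[nhds (0:ℂ)] F2 m u :=
        Filter.eventuallyEq_of_mem (hSclosed.isOpen_compl.mem_nhds h0S)
          (fun w hw => (hF20 w hw).symm)
      exact (differentiableAt_const (0:ℝ)).congr_of_eventuallyEq hev.symm
    · have hn := hnz z hz
      have hre : HasFDerivAt (fun w : ℂ => w.re) Complex.reCLM z := Complex.reCLM.hasFDerivAt
      have him : HasFDerivAt (fun w : ℂ => w.im) Complex.imCLM z := Complex.imCLM.hasFDerivAt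
      have hu' : HasFDerivAt u (fderiv ℝ u z) z :=
        (hu.differentiable (by simp)).differentiableAt.hasFDerivAt
      have hp := hasF_pd1 hu z
      have hq := hasF_pd2 hu z
      have hN := ((hre.mul hre).add (him.mul him))
      have hNi := (hasDerivAt_inv hn).comp_hasFDerivAt z hN
      have hW := ((hre.mul hp).add (him.mul hq)).sub hu'
      have hF2 : HasFDerivAt (F2 m u) _ z :=
        ((((hW.mul hNi).mul hq).const_mul (4*(m-1))).sub
          (((((hp.mul hp).add (hq.mul hq)).mul him).mul hNi).const_mul (2*(m-1)))).add
          ((((hu'.mul hu').mul him).mul (hNi.mul hNi)).const_mul (2*(m-1)*((m-1)^2+2*(m-1)+2)))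
      exact hF2.differentiableAt
  -- F1, F2 vanish outside S, hence derivatives vanish outside S as well
  have hdF10 : ∀ z ∉ S, fderiv ℝ (F1 m u) z = 0 := by
    intro z hz
    have hev : F1 m u =ᶠ[nhds z] fun _ => (0:ℝ) :=
      Filter.eventuallyEq_of_mem (hSclosed.isOpen_compl.mem_nhds hz) (fun w hw => hF10 w hw)
    rw [hev.fderiv_eq]; exact fderiv_const_apply 0
  have hdF20 : ∀ z ∉ S, fderiv ℝ (F2 m u) z = 0 := by
    intro z hz
    have hev : F2 m u =ᶠ[nhds z] fun _ => (0:ℝ) :=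
      Filter.eventuallyEq_of_mem (hSclosed.isOpen_compl.mem_nhds hz) (fun w hw => hF20 w hw)
    rw [hev.fderiv_eq]; exact fderiv_const_apply 0
  -- smoothness of F1, F2 away from 0, for the continuity of their derivatives
  have hcdF1 : ∀ z : ℂ, z ≠ 0 → ContDiffAt ℝ (⊤:ℕ∞) (F1 m u) z := by
    intro z hz
    have hre : ContDiff ℝ (⊤:ℕ∞) (fun w : ℂ => w.re) := Complex.reCLM.contDiff
    have him : ContDiff ℝ (⊤:ℕ∞) (fun w : ℂ => w.im) := Complex.imCLM.contDiff
    have hNi : ContDiffAt ℝ (⊤:ℕ∞) (fun w : ℂ => (w.re*w.re+w.im*w.im)⁻¹) z :=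
      (((hre.mul hre).add (him.mul him)).contDiffAt).inv (hnz z hz)
    have hp := contDiff_pd1 hu
    have hq := contDiff_pd2 hu
    exact ((contDiffAt_const.mul (((((hre.contDiffAt.mul hp.contDiffAt).add
        (him.contDiffAt.mul hq.contDiffAt)).sub hu.contDiffAt).mul hNi).mul
        hp.contDiffAt)).sub
        (contDiffAt_const.mul ((((hp.contDiffAt.mul hp.contDiffAt).add
          (hq.contDiffAt.mul hq.contDiffAt)).mul hre.contDiffAt).mul hNi))).add
        (contDiffAt_const.mul (((hu.contDiffAt.mul hu.contDiffAt).mul hre.contDiffAt).mul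
          (hNi.mul hNi)))
  have hcdF2 : ∀ z : ℂ, z ≠ 0 → ContDiffAt ℝ (⊤:ℕ∞) (F2 m u) z := by
    intro z hz
    have hre : ContDiff ℝ (⊤:ℕ∞) (fun w : ℂ => w.re) := Complex.reCLM.contDiff
    have him : ContDiff ℝ (⊤:ℕ∞) (fun w : ℂ => w.im) := Complex.imCLM.contDiff
    have hNi : ContDiffAt ℝ (⊤:ℕ∞) (fun w : ℂ => (w.re*w.re+w.im*w.im)⁻¹) z :=
      (((hre.mul hre).add (him.mul him)).contDiffAt).inv (hnz z hz)
    have hp := contDiff_pd1 hu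
    have hq := contDiff_pd2 hu
    exact ((contDiffAt_const.mul (((((hre.contDiffAt.mul hp.contDiffAt).add
        (him.contDiffAt.mul hq.contDiffAt)).sub hu.contDiffAt).mul hNi).mul
        hq.contDiffAt)).sub
        (contDiffAt_const.mul ((((hp.contDiffAt.mul hp.contDiffAt).add
          (hq.contDiffAt.mul hq.contDiffAt)).mul him.contDiffAt).mul hNi))).add
        (contDiffAt_const.mul (((hu.contDiffAt.mul hu.contDiffAt).mul him.contDiffAt).mul
          (hNi.mul hNi)))
  -- continuity of the partial derivatives of F1, F2
  have hcont_dF1 : Continuous (fun z => fderiv ℝ (F1 m u) z 1) := by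
    apply cont_glue hSclosed h0S
    · intro z hz
      have h := ((hcdF1 z hz).fderiv_right (m := (⊤:ℕ∞)) (by simp)).continuousAt
      exact ((ContinuousLinearMap.apply ℝ ℝ (1:ℂ)).continuous.continuousAt).comp h
    · intro z hz; rw [hdF10 z hz]; rfl
  have hcont_dF2 : Continuous (fun z => fderiv ℝ (F2 m u) z Complex.I) := by
    apply cont_glue hSclosed h0S
    · intro z hz
      have h := ((hcdF2 z hz).fderiv_right (m := (⊤:ℕ∞)) (by simp)).continuousAt
      exact ((ContinuousLinearMap.apply ℝ ℝ (Complex.I)).continuous.continuousAt).comp h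
    · intro z hz; rw [hdF20 z hz]; rfl
  -- continuity of F1, F2 themselves
  have hcontF1 : Continuous (F1 m u) :=
    cont_glue hSclosed h0S (fun z hz => (hcdF1 z hz).continuousAt) hF10
  have hcontF2 : Continuous (F2 m u) :=
    cont_glue hSclosed h0S (fun z hz => (hcdF2 z hz).continuousAt) hF20
  -- compact support facts
  have hHCS : ∀ f : ℂ → ℝ, (∀ z ∉ S, f z = 0) → HasCompactSupport f := by
    intro f hf
    exact HasCompactSupport.intro hcs hf
  -- integrability of the various functions
  have hiF1 : Integrable (F1 m u) := hcontF1.integrable_of_hasCompactSupport (hHCS _ hF10)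
  have hiF2 : Integrable (F2 m u) := hcontF2.integrable_of_hasCompactSupport (hHCS _ hF20)
  have hidF1 : Integrable (fun z => fderiv ℝ (F1 m u) z 1) :=
    hcont_dF1.integrable_of_hasCompactSupport
      (hHCS _ (fun z hz => by rw [hdF10 z hz]; rfl))
  have hidF2 : Integrable (fun z => fderiv ℝ (F2 m u) z Complex.I) :=
    hcont_dF2.integrable_of_hasCompactSupport
      (hHCS _ (fun z hz => by rw [hdF20 z hz]; rfl))
  -- continuity and integrability of the two right-hand side integrands
  have habs2 : ∀ z : ℂ, z ≠ 0 → (‖z‖ : ℝ)^2 ≠ 0 := by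
    intro z hz
    simpa using hz
  have hcont_f1 : Continuous (fun z => (lap u z + (m ^ 2 - 1) * u z / ‖z‖ ^ 2) ^ 2) := by
    apply cont_glue hSclosed h0S
    · intro z hz
      exact (((continuous_lap hu).continuousAt).add
        (((continuousAt_const.mul (hu.continuous.continuousAt)).div
          ((continuous_norm.continuousAt).pow 2) (habs2 z hz)))).pow 2
    · intro z hz
      rw [hlap0 z hz, hu0 z hz]; ring
  have hcont_f2 : Continuous (fun z =>
      ((z.re * pd1 u z + z.im * pd2 u z) / ‖z‖ ^ 2 - u z / ‖z‖ ^ 2) ^ 2) := by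
    apply cont_glue hSclosed h0S
    · intro z hz
      have h1 : ContinuousAt (fun z : ℂ => z.re * pd1 u z + z.im * pd2 u z) z :=
        ((Complex.continuous_re.continuousAt).mul (contDiff_pd1 hu).continuous.continuousAt).add
          ((Complex.continuous_im.continuousAt).mul (contDiff_pd2 hu).continuous.continuousAt)
      exact ((h1.div ((continuous_norm.continuousAt).pow 2) (habs2 z hz)).sub
        ((hu.continuous.continuousAt).div
          ((continuous_norm.continuousAt).pow 2) (habs2 z hz))).pow 2
    · intro z hz
      rw [hu0 z hz, hp0 z hz, hq0 z hz]; ring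
  have hi_f1 : Integrable (fun z => (lap u z + (m ^ 2 - 1) * u z / ‖z‖ ^ 2) ^ 2) :=
    hcont_f1.integrable_of_hasCompactSupport
      (hHCS _ (fun z hz => by rw [hlap0 z hz, hu0 z hz]; ring))
  have hi_f2 : Integrable (fun z =>
      ((z.re * pd1 u z + z.im * pd2 u z) / ‖z‖ ^ 2 - u z / ‖z‖ ^ 2) ^ 2) :=
    hcont_f2.integrable_of_hasCompactSupport
      (hHCS _ (fun z hz => by rw [hu0 z hz, hp0 z hz, hq0 z hz]; ring))
  -- measurability of the annulus
  have hann_open : IsOpen (ann a b) := by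
    have : ann a b = (fun z : ℂ => ‖z‖) ⁻¹' (Set.Ioo a b) := rfl
    rw [this]
    exact isOpen_Ioo.preimage continuous_norm
  have hann_meas : MeasurableSet (ann a b) := hann_open.measurableSet
  -- the divergence term
  set g : ℂ → ℝ := fun z => pd1 (F1 m u) z + pd2 (F2 m u) z with hg_def
  have hg0 : ∀ z ∉ S, g z = 0 := by
    intro z hz
    simp only [hg_def, pd1, pd2, hdF10 z hz, hdF20 z hz]
    simp
  have hig : Integrable g := by
    have : g = (fun z => fderiv ℝ (F1 m u) z 1) + (fun z => fderiv ℝ (F2 m u) z Complex.I) := rfl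
    rw [this]
    exact hidF1.add hidF2
  have hint_g : (∫ z in ann a b, g z) = 0 := by
    rw [setIntegral_eq_integral_of_forall_compl_eq_zero
      (fun z hz => hg0 z (fun hmem => hz (hsupp hmem)))]
    have : (∫ z : ℂ, g z) = (∫ z : ℂ, fderiv ℝ (F1 m u) z 1) +
        (∫ z : ℂ, fderiv ℝ (F2 m u) z Complex.I) := by
      rw [hg_def]
      exact integral_add hidF1 hidF2
    rw [this, int_fderiv_zero 1 hdiffF1 hiF1 hidF1,
      int_fderiv_zero Complex.I hdiffF2 hiF2 hidF2]
    ring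
  -- pointwise identity on the annulus
  have hpointwise : ∀ z ∈ ann a b,
      Lop m u z ^ 2 =
        (lap u z + (m ^ 2 - 1) * u z / ‖z‖ ^ 2) ^ 2 +
          4 * (m ^ 2 - 1) *
            ((z.re * pd1 u z + z.im * pd2 u z) / ‖z‖ ^ 2
              - u z / ‖z‖ ^ 2) ^ 2 + g z := by
    intro z hz
    have hz0 : z ≠ 0 := by
      intro h
      rw [h] at hz
      exact h0ann hz
    exact div_identity m hu z (hnz z hz0)
  calc (∫ z in ann a b, Lop m u z ^ 2)
      = ∫ z in ann a b,
          ((lap u z + (m ^ 2 - 1) * u z / ‖z‖ ^ 2) ^ 2 +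
            4 * (m ^ 2 - 1) *
              ((z.re * pd1 u z + z.im * pd2 u z) / ‖z‖ ^ 2
                - u z / ‖z‖ ^ 2) ^ 2 + g z) := by
        exact setIntegral_congr_fun hann_meas (fun z hz => hpointwise z hz)
    _ = (∫ z in ann a b, (lap u z + (m ^ 2 - 1) * u z / ‖z‖ ^ 2) ^ 2) +
          4 * (m ^ 2 - 1) *
            (∫ z in ann a b,
              ((z.re * pd1 u z + z.im * pd2 u z) / ‖z‖ ^ 2
                - u z / ‖z‖ ^ 2) ^ 2) := by
        rw [integral_add (μ := volume.restrict (ann a b)) (f := fun z =>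
            (lap u z + (m ^ 2 - 1) * u z / ‖z‖ ^ 2) ^ 2 +
              4 * (m ^ 2 - 1) *
                ((z.re * pd1 u z + z.im * pd2 u z) / ‖z‖ ^ 2
                  - u z / ‖z‖ ^ 2) ^ 2) (g := g)
          (by exact (hi_f1.add (hi_f2.const_mul (4 * (m ^ 2 - 1)))).restrict)
          (hig.integrableOn (s := ann a b))]
        rw [integral_add (μ := volume.restrict (ann a b)) (f := fun z =>
            (lap u z + (m ^ 2 - 1) * u z / ‖z‖ ^ 2) ^ 2)
          (g := fun z => 4 * (m ^ 2 - 1) *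
                ((z.re * pd1 u z + z.im * pd2 u z) / ‖z‖ ^ 2
                  - u z / ‖z‖ ^ 2) ^ 2)
          (hi_f1.integrableOn (s := ann a b)) ((hi_f2.integrableOn (s := ann a b)).const_mul _)]
        rw [integral_const_mul, hint_g]
        ring

end
end

section
/- Let m > 1 and α be real numbers, let 0 < a < b, and let Ω = {x ∈ ℝ² : a < |x| < b}. Every smooth function u : ℝ² → ℝ whose closed support is a compact subset of Ω satisfies the identity ∫_Ω ((𝓛_m u)(x))²·|x|^α dx = ∫_Ω (Δu(x) + (m²−1)·u(x)/|x|²)²·|x|^α dx + 4(m²−1)·∫_Ω ((x·∇u(x))/|x|² − u(x)/|x|²)²·|x|^α dx − 2α(m−1)·∫_Ω ((x·∇u(x))/|x|²)²·|x|^α dx + 2α(m−1)·∫_Ω ((x₁·∂₂u(x) − x₂·∂₁u(x))²/|x|⁴)·|x|^α dx − 2α(m−1)(m²−1+α)·∫_Ω (u(x)²/|x|⁴)·|x|^α dx. -/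
open MeasureTheory

noncomputable section

namespace S2

/-- weight `(x²+y²)^β` -/
def wgt (β : ℝ) (z : ℂ) : ℝ := (z.re * z.re + z.im * z.im) ^ β

lemma normSq_pos {z : ℂ} (hz : z ≠ 0) : 0 < z.re * z.re + z.im * z.im := by
  have := Complex.normSq_pos.mpr hz
  rwa [Complex.normSq_apply] at this

lemma abs_rpow_eq (α : ℝ) (z : ℂ) : ‖z‖ ^ α = wgt (α / 2) z := by
  rw [wgt, ← Complex.normSq_apply, Complex.norm_def, Real.sqrt_eq_rpow,
    ← Real.rpow_mul (Complex.normSq_nonneg z)]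
  rw [show 1 / 2 * α = α / 2 by ring]

lemma abs_sq_eq (z : ℂ) : ‖z‖ ^ (2 : ℕ) = z.re * z.re + z.im * z.im := by
  rw [Complex.sq_norm, Complex.normSq_apply]

lemma hasFDerivAt_wgt (β : ℝ) {z : ℂ} (hz : z ≠ 0) :
    HasFDerivAt (wgt β)
      ((β * wgt (β - 1) z) •
        ((2 * z.re) • Complex.reCLM + (2 * z.im) • Complex.imCLM) : ℂ →L[ℝ] ℝ) z := by
  have hre : HasFDerivAt (fun w : ℂ => w.re) (Complex.reCLM : ℂ →L[ℝ] ℝ) z :=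
    Complex.reCLM.hasFDerivAt
  have him : HasFDerivAt (fun w : ℂ => w.im) (Complex.imCLM : ℂ →L[ℝ] ℝ) z :=
    Complex.imCLM.hasFDerivAt
  have hs : HasFDerivAt (fun w : ℂ => w.re * w.re + w.im * w.im)
      (z.re • Complex.reCLM + z.re • Complex.reCLM +
        (z.im • Complex.imCLM + z.im • Complex.imCLM) : ℂ →L[ℝ] ℝ) z :=
    (hre.mul hre).add (him.mul him)
  have hr : HasDerivAt (fun s : ℝ => s ^ β) (β * (z.re * z.re + z.im * z.im) ^ (β - 1))
      (z.re * z.re + z.im * z.im) :=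
    (Real.hasStrictDerivAt_rpow_const_of_ne (normSq_pos hz).ne' β).hasDerivAt
  have := hr.comp_hasFDerivAt z hs
  refine HasFDerivAt.congr_fderiv this ?_
  ext w
  simp [wgt, ContinuousLinearMap.smul_apply, smul_eq_mul]
  ring

lemma contDiffAt_wgt (β : ℝ) {z : ℂ} (hz : z ≠ 0) : ContDiffAt ℝ (⊤ : ℕ∞) (wgt β) z := by
  have h1 : ContDiffAt ℝ (⊤ : ℕ∞) (fun s : ℝ => s ^ β) (z.re * z.re + z.im * z.im) :=
    Real.contDiffAt_rpow_const_of_ne (normSq_pos hz).ne'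
  have h2 : ContDiffAt ℝ (⊤ : ℕ∞) (fun w : ℂ => w.re * w.re + w.im * w.im) z :=
    (((Complex.reCLM.contDiff.mul Complex.reCLM.contDiff).add
      (Complex.imCLM.contDiff.mul Complex.imCLM.contDiff)).contDiffAt)
  exact h1.comp z h2


variable {u : ℂ → ℝ}

lemma contDiff_pdv (hu : ContDiff ℝ (⊤ : ℕ∞) u) (v : ℂ) :
    ContDiff ℝ (⊤ : ℕ∞) (fun z => fderiv ℝ u z v) :=
  (ContinuousLinearMap.apply ℝ ℝ v).contDiff.comp (hu.fderiv_right (by norm_cast))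

lemma contDiff_pd1 (hu : ContDiff ℝ (⊤ : ℕ∞) u) : ContDiff ℝ (⊤ : ℕ∞) (pd1 u) :=
  contDiff_pdv hu 1

lemma contDiff_pd2 (hu : ContDiff ℝ (⊤ : ℕ∞) u) : ContDiff ℝ (⊤ : ℕ∞) (pd2 u) :=
  contDiff_pdv hu Complex.I

lemma diff_top {F : Type*} [NormedAddCommGroup F] [NormedSpace ℝ F] {f : ℂ → F}
    (hf : ContDiff ℝ (⊤ : ℕ∞) f) : Differentiable ℝ f :=
  hf.differentiable (by norm_cast)

lemma pd_symm (hu : ContDiff ℝ (⊤ : ℕ∞) u) (z : ℂ) : pd1 (pd2 u) z = pd2 (pd1 u) z := by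
  have hsymm : ∀ v w, fderiv ℝ (fderiv ℝ u) z v w = fderiv ℝ (fderiv ℝ u) z w v :=
    (hu.contDiffAt).isSymmSndFDerivAt (by rw [minSmoothness_of_isRCLikeNormedField]; exact WithTop.coe_le_coe.mpr (le_top : (2 : ℕ∞) ≤ ⊤))
  have hdf : DifferentiableAt ℝ (fderiv ℝ u) z :=
    (diff_top (hu.fderiv_right (by norm_cast))) z
  have h1 : pd1 (pd2 u) z = fderiv ℝ (fderiv ℝ u) z 1 Complex.I := by
    show fderiv ℝ (fun w => fderiv ℝ u w Complex.I) z 1 = _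
    rw [fderiv_clm_apply hdf (differentiableAt_const _)]
    simp
  have h2 : pd2 (pd1 u) z = fderiv ℝ (fderiv ℝ u) z Complex.I 1 := by
    show fderiv ℝ (fun w => fderiv ℝ u w 1) z Complex.I = _
    rw [fderiv_clm_apply hdf (differentiableAt_const _)]
    simp
  rw [h1, h2, hsymm]

lemma pdv_zero_outside {z : ℂ} (hz : z ∉ tsupport u) (v : ℂ) : fderiv ℝ u z v = 0 := by
  have : fderiv ℝ u z = 0 := by
    by_contra h
    exact hz (support_fderiv_subset ℝ (Function.mem_support.mpr h))
  simp [this]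

lemma tsupport_pdv_subset (v : ℂ) : tsupport (fun z => fderiv ℝ u z v) ⊆ tsupport u := by
  apply closure_minimal _ (isClosed_tsupport u)
  intro z hz
  by_contra h
  exact hz (pdv_zero_outside h v)

/-- an everywhere-smooth compactly supported function has vanishing integral of any
directional derivative -/
lemma integral_pdv_eq_zero {f : ℂ → ℝ} (hf : ContDiff ℝ (⊤ : ℕ∞) f)
    (hcs : HasCompactSupport f) (v : ℂ) : (∫ z : ℂ, fderiv ℝ f z v) = 0 := by
  have hint : Integrable f := hf.continuous.integrable_of_hasCompactSupport hcs
  have hdint : Integrable (fun z : ℂ => fderiv ℝ f z v) := by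
    apply Continuous.integrable_of_hasCompactSupport
    · exact (contDiff_pdv hf v).continuous
    · exact HasCompactSupport.of_support_subset_isCompact hcs
        (Function.support_subset_iff'.mpr (fun z hz => pdv_zero_outside hz v))
  have h := integral_mul_fderiv_eq_neg_fderiv_mul_of_integrable
    (f := fun _ : ℂ => (1 : ℝ)) (g := f) (v := v)
    (by simpa using (integrable_zero ℂ ℝ volume)) (by simpa using hdint)
    (by simpa using hint) (fun x _ => differentiableAt_const (1 : ℝ)) (fun x _ => diff_top hf x)
  simpa using h


/-- first component of the auxiliary vector field -/
def PP (α C : ℝ) (u : ℂ → ℝ) (z : ℂ) : ℝ :=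
  wgt ((α - 2) / 2) z *
      (2 * ((z.re * pd1 u z + z.im * pd2 u z) * pd1 u z)
        - z.re * (pd1 u z * pd1 u z + pd2 u z * pd2 u z) - 2 * (u z * pd1 u z))
    + C * (wgt ((α - 4) / 2) z * (u z * u z * z.re))

/-- second component of the auxiliary vector field -/
def QQ (α C : ℝ) (u : ℂ → ℝ) (z : ℂ) : ℝ :=
  wgt ((α - 2) / 2) z *
      (2 * ((z.re * pd1 u z + z.im * pd2 u z) * pd2 u z)
        - z.im * (pd1 u z * pd1 u z + pd2 u z * pd2 u z) - 2 * (u z * pd2 u z))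
    + C * (wgt ((α - 4) / 2) z * (u z * u z * z.im))

lemma wgt_add_one (β : ℝ) {z : ℂ} (hz : z ≠ 0) :
    wgt (β + 1) z = wgt β z * (z.re * z.re + z.im * z.im) := by
  rw [wgt, wgt, Real.rpow_add_one (normSq_pos hz).ne']

lemma key (m α : ℝ) (hu : ContDiff ℝ (⊤ : ℕ∞) u) {z : ℂ} (hz : z ≠ 0) :
    Lop m u z ^ 2 * ‖z‖ ^ α =
      (lap u z + (m ^ 2 - 1) * u z / ‖z‖ ^ 2) ^ 2 * ‖z‖ ^ α
      + 4 * (m ^ 2 - 1) *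
          (((z.re * pd1 u z + z.im * pd2 u z) / ‖z‖ ^ 2
            - u z / ‖z‖ ^ 2) ^ 2 * ‖z‖ ^ α)
      - 2 * α * (m - 1) *
          (((z.re * pd1 u z + z.im * pd2 u z) / ‖z‖ ^ 2) ^ 2 * ‖z‖ ^ α)
      + 2 * α * (m - 1) *
          ((z.re * pd2 u z - z.im * pd1 u z) ^ 2 / ‖z‖ ^ 4 * ‖z‖ ^ α)
      - 2 * α * (m - 1) * (m ^ 2 - 1 + α) *
          (u z ^ 2 / ‖z‖ ^ 4 * ‖z‖ ^ α)
      + 2 * (m - 1) *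
          (fderiv ℝ (PP α (m ^ 2 - 1 + α + 2) u) z 1
            + fderiv ℝ (QQ α (m ^ 2 - 1 + α + 2) u) z Complex.I) := by
  have hre : HasFDerivAt (fun w : ℂ => w.re) (Complex.reCLM : ℂ →L[ℝ] ℝ) z :=
    Complex.reCLM.hasFDerivAt
  have him : HasFDerivAt (fun w : ℂ => w.im) (Complex.imCLM : ℂ →L[ℝ] ℝ) z :=
    Complex.imCLM.hasFDerivAt
  have hu' : HasFDerivAt u (fderiv ℝ u z) z := ((diff_top hu) z).hasFDerivAt
  have hux : HasFDerivAt (pd1 u) (fderiv ℝ (pd1 u) z) z :=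
    ((diff_top (contDiff_pd1 hu)) z).hasFDerivAt
  have huy : HasFDerivAt (pd2 u) (fderiv ℝ (pd2 u) z) z :=
    ((diff_top (contDiff_pd2 hu)) z).hasFDerivAt
  have hw1 := hasFDerivAt_wgt ((α - 2) / 2) hz
  have hw2 := hasFDerivAt_wgt ((α - 4) / 2) hz
  set C := m ^ 2 - 1 + α + 2 with hC
  have eP := HasFDerivAt.fderiv (show HasFDerivAt (PP α C u) _ z from
    (hw1.mul (((((hre.mul hux).add (him.mul huy)).mul hux).const_mul 2).sub
        (hre.mul ((hux.mul hux).add (huy.mul huy))) |>.sub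
        ((hu'.mul hux).const_mul 2))).add
      ((hw2.mul ((hu'.mul hu').mul hre)).const_mul C))
  have eQ := HasFDerivAt.fderiv (show HasFDerivAt (QQ α C u) _ z from
    (hw1.mul (((((hre.mul hux).add (him.mul huy)).mul huy).const_mul 2).sub
        (him.mul ((hux.mul hux).add (huy.mul huy))) |>.sub
        ((hu'.mul huy).const_mul 2))).add
      ((hw2.mul ((hu'.mul hu').mul him)).const_mul C))
  rw [eP, eQ]
  simp only [Lop, lap, pd1, pd2]
  simp only [ContinuousLinearMap.add_apply, ContinuousLinearMap.smul_apply,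
    ContinuousLinearMap.sub_apply, ContinuousLinearMap.coe_smul', Pi.smul_apply,
    ContinuousLinearMap.coe_sub', Pi.sub_apply, Complex.reCLM_apply, Complex.imCLM_apply,
    Complex.one_re, Complex.one_im, Complex.I_re, Complex.I_im, smul_eq_mul,
    Pi.mul_apply, Pi.add_apply, pd1, pd2]
  rw [show fderiv ℝ (pd2 u) z 1 = fderiv ℝ (pd1 u) z Complex.I from pd_symm hu z]
  have hs := normSq_pos hz
  have h2 : wgt ((α - 2) / 2 - 1) z = wgt ((α - 6) / 2) z * (z.re * z.re + z.im * z.im) := by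
    rw [show (α - 2) / 2 - 1 = (α - 6) / 2 + 1 by ring, wgt_add_one _ hz]
  have h1 : wgt ((α - 2) / 2) z =
      wgt ((α - 6) / 2) z * (z.re * z.re + z.im * z.im) * (z.re * z.re + z.im * z.im) := by
    rw [show (α - 2) / 2 = ((α - 6) / 2 + 1) + 1 by ring, wgt_add_one _ hz, wgt_add_one _ hz]
  have h3 : wgt ((α - 4) / 2) z = wgt ((α - 6) / 2) z * (z.re * z.re + z.im * z.im) := by
    rw [show (α - 4) / 2 = (α - 6) / 2 + 1 by ring, wgt_add_one _ hz]
  have h4 : wgt ((α - 4) / 2 - 1) z = wgt ((α - 6) / 2) z := by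
    rw [show (α - 4) / 2 - 1 = (α - 6) / 2 by ring]
  have h5 : ‖z‖ ^ α = wgt ((α - 6) / 2) z * (z.re * z.re + z.im * z.im)
      * (z.re * z.re + z.im * z.im) * (z.re * z.re + z.im * z.im) := by
    rw [abs_rpow_eq, show α / 2 = (((α - 6) / 2 + 1) + 1) + 1 by ring,
      wgt_add_one _ hz, wgt_add_one _ hz, wgt_add_one _ hz]
  have h6 : ‖z‖ ^ (4 : ℕ) =
      (z.re * z.re + z.im * z.im) * (z.re * z.re + z.im * z.im) := by
    rw [show (4 : ℕ) = 2 * 2 from rfl, pow_mul, abs_sq_eq]; ring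
  rw [h1, h2, h3, h4, h5, h6, abs_sq_eq]
  set W := wgt ((α - 6) / 2) z
  set s := z.re * z.re + z.im * z.im
  field_simp
  ring


lemma pd1_zero {z : ℂ} (hz : z ∉ tsupport u) : pd1 u z = 0 := pdv_zero_outside hz 1
lemma pd2_zero {z : ℂ} (hz : z ∉ tsupport u) : pd2 u z = 0 := pdv_zero_outside hz Complex.I
lemma pd11_zero {z : ℂ} (hz : z ∉ tsupport u) : pd1 (pd1 u) z = 0 :=
  pdv_zero_outside (fun h => hz (tsupport_pdv_subset 1 h)) 1
lemma pd22_zero {z : ℂ} (hz : z ∉ tsupport u) : pd2 (pd2 u) z = 0 :=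
  pdv_zero_outside (fun h => hz (tsupport_pdv_subset Complex.I h)) Complex.I

lemma fderiv_zero_of_eventually {f : ℂ → ℝ} {z : ℂ} (h : ∀ᶠ w in nhds z, f w = 0) (v : ℂ) :
    fderiv ℝ f z v = 0 := by
  have h' : f =ᶠ[nhds z] (fun _ => (0 : ℝ)) := h
  rw [h'.fderiv_eq]
  simp

lemma PP_zero {α C : ℝ} {z : ℂ} (hz : z ∉ tsupport u) : PP α C u z = 0 := by
  simp [PP, pd1_zero hz, pd2_zero hz, image_eq_zero_of_notMem_tsupport hz]

lemma QQ_zero {α C : ℝ} {z : ℂ} (hz : z ∉ tsupport u) : QQ α C u z = 0 := by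
  simp [QQ, pd1_zero hz, pd2_zero hz, image_eq_zero_of_notMem_tsupport hz]

lemma contDiff_PP (hu : ContDiff ℝ (⊤ : ℕ∞) u) (h0 : (0 : ℂ) ∉ tsupport u) (α C : ℝ) :
    ContDiff ℝ (⊤ : ℕ∞) (PP α C u) := by
  rw [contDiff_iff_contDiffAt]
  intro z
  rcases eq_or_ne z 0 with rfl | hz
  · have hev : PP α C u =ᶠ[nhds 0] (fun _ => (0 : ℝ)) := by
      filter_upwards [((isClosed_tsupport u).isOpen_compl).mem_nhds h0] with w hw
      exact PP_zero hw
    exact (contDiffAt_const (c := (0 : ℝ))).congr_of_eventuallyEq hev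
  · have hre : ContDiffAt ℝ (⊤ : ℕ∞) (fun w : ℂ => w.re) z := Complex.reCLM.contDiff.contDiffAt
    have him : ContDiffAt ℝ (⊤ : ℕ∞) (fun w : ℂ => w.im) z := Complex.imCLM.contDiff.contDiffAt
    have hux := (contDiff_pd1 hu).contDiffAt (x := z)
    have huy := (contDiff_pd2 hu).contDiffAt (x := z)
    have hu0 := hu.contDiffAt (x := z)
    exact ((contDiffAt_wgt _ hz).mul
      (((contDiffAt_const.mul (((hre.mul hux).add (him.mul huy)).mul hux)).sub
        (hre.mul ((hux.mul hux).add (huy.mul huy)))).sub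
        (contDiffAt_const.mul (hu0.mul hux)))).add
      (contDiffAt_const.mul ((contDiffAt_wgt _ hz).mul ((hu0.mul hu0).mul hre)))

lemma contDiff_QQ (hu : ContDiff ℝ (⊤ : ℕ∞) u) (h0 : (0 : ℂ) ∉ tsupport u) (α C : ℝ) :
    ContDiff ℝ (⊤ : ℕ∞) (QQ α C u) := by
  rw [contDiff_iff_contDiffAt]
  intro z
  rcases eq_or_ne z 0 with rfl | hz
  · have hev : QQ α C u =ᶠ[nhds 0] (fun _ => (0 : ℝ)) := by
      filter_upwards [((isClosed_tsupport u).isOpen_compl).mem_nhds h0] with w hw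
      exact QQ_zero hw
    exact (contDiffAt_const (c := (0 : ℝ))).congr_of_eventuallyEq hev
  · have hre : ContDiffAt ℝ (⊤ : ℕ∞) (fun w : ℂ => w.re) z := Complex.reCLM.contDiff.contDiffAt
    have him : ContDiffAt ℝ (⊤ : ℕ∞) (fun w : ℂ => w.im) z := Complex.imCLM.contDiff.contDiffAt
    have hux := (contDiff_pd1 hu).contDiffAt (x := z)
    have huy := (contDiff_pd2 hu).contDiffAt (x := z)
    have hu0 := hu.contDiffAt (x := z)
    exact ((contDiffAt_wgt _ hz).mul
      (((contDiffAt_const.mul (((hre.mul hux).add (him.mul huy)).mul huy)).sub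
        (him.mul ((hux.mul hux).add (huy.mul huy)))).sub
        (contDiffAt_const.mul (hu0.mul huy)))).add
      (contDiffAt_const.mul ((contDiffAt_wgt _ hz).mul ((hu0.mul hu0).mul him)))

lemma integrable_aux {f : ℂ → ℝ} (hK : IsCompact (tsupport u)) (h0 : (0 : ℂ) ∉ tsupport u)
    (hct : ∀ z : ℂ, z ≠ 0 → ContinuousAt f z) (hvan : ∀ z, z ∉ tsupport u → f z = 0) :
    Integrable f := by
  have hcont : Continuous f := by
    rw [continuous_iff_continuousAt]
    intro z
    rcases eq_or_ne z 0 with rfl | hz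
    · apply Filter.EventuallyEq.continuousAt (y := (0 : ℝ))
      filter_upwards [((isClosed_tsupport u).isOpen_compl).mem_nhds h0] with w hw
      exact hvan w hw
    · exact hct z hz
  exact hcont.integrable_of_hasCompactSupport (HasCompactSupport.intro hK hvan)

end S2


/-- The weighted identity for `∫ (𝓛_m u)² |x|^α` on the annulus,
featuring the angular derivative `∂_θ u = x₁∂₂u − x₂∂₁u`. -/
theorem statement2 (m α : ℝ) (hm : 1 < m) (a b : ℝ) (ha : 0 < a) (hab : a < b)
    (u : ℂ → ℝ) (hu : ContDiff ℝ (⊤ : ℕ∞) u) (hcs : IsCompact (tsupport u))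
    (hsupp : tsupport u ⊆ ann a b) :
    (∫ z in ann a b, Lop m u z ^ 2 * ‖z‖ ^ α) =
      (∫ z in ann a b,
          (lap u z + (m ^ 2 - 1) * u z / ‖z‖ ^ 2) ^ 2 * ‖z‖ ^ α) +
        4 * (m ^ 2 - 1) *
          (∫ z in ann a b,
            ((z.re * pd1 u z + z.im * pd2 u z) / ‖z‖ ^ 2
              - u z / ‖z‖ ^ 2) ^ 2 * ‖z‖ ^ α) -
        2 * α * (m - 1) *
          (∫ z in ann a b,
            ((z.re * pd1 u z + z.im * pd2 u z) / ‖z‖ ^ 2) ^ 2 *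
              ‖z‖ ^ α) +
        2 * α * (m - 1) *
          (∫ z in ann a b,
            (z.re * pd2 u z - z.im * pd1 u z) ^ 2 / ‖z‖ ^ 4 *
              ‖z‖ ^ α) -
        2 * α * (m - 1) * (m ^ 2 - 1 + α) *
          (∫ z in ann a b, u z ^ 2 / ‖z‖ ^ 4 * ‖z‖ ^ α) := by
  classical
  -- the six integrands
  set F1 : ℂ → ℝ := fun z => Lop m u z ^ 2 * ‖z‖ ^ α with hF1
  set F2 : ℂ → ℝ := fun z =>
    (lap u z + (m ^ 2 - 1) * u z / ‖z‖ ^ 2) ^ 2 * ‖z‖ ^ α with hF2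
  set F3 : ℂ → ℝ := fun z =>
    ((z.re * pd1 u z + z.im * pd2 u z) / ‖z‖ ^ 2
      - u z / ‖z‖ ^ 2) ^ 2 * ‖z‖ ^ α with hF3
  set F4 : ℂ → ℝ := fun z =>
    ((z.re * pd1 u z + z.im * pd2 u z) / ‖z‖ ^ 2) ^ 2 * ‖z‖ ^ α with hF4
  set F5 : ℂ → ℝ := fun z =>
    (z.re * pd2 u z - z.im * pd1 u z) ^ 2 / ‖z‖ ^ 4 * ‖z‖ ^ α with hF5
  set F6 : ℂ → ℝ := fun z => u z ^ 2 / ‖z‖ ^ 4 * ‖z‖ ^ α with hF6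
  have h0 : (0 : ℂ) ∉ tsupport u := by
    intro h
    have := (hsupp h).1
    simp only [norm_zero] at this
    linarith
  have hnot : ∀ z : ℂ, z ∉ ann a b → z ∉ tsupport u := fun z hz h => hz (hsupp h)
  -- vanishing of the integrands outside the support
  have hvan1 : ∀ z : ℂ, z ∉ tsupport u → F1 z = 0 := by
    intro z hz
    simp [hF1, Lop, lap, S2.pd1_zero hz, S2.pd2_zero hz, S2.pd11_zero hz, S2.pd22_zero hz,
      image_eq_zero_of_notMem_tsupport hz]
  have hvan2 : ∀ z : ℂ, z ∉ tsupport u → F2 z = 0 := by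
    intro z hz
    simp [hF2, lap, S2.pd11_zero hz, S2.pd22_zero hz, image_eq_zero_of_notMem_tsupport hz]
  have hvan3 : ∀ z : ℂ, z ∉ tsupport u → F3 z = 0 := by
    intro z hz
    simp [hF3, S2.pd1_zero hz, S2.pd2_zero hz, image_eq_zero_of_notMem_tsupport hz]
  have hvan4 : ∀ z : ℂ, z ∉ tsupport u → F4 z = 0 := by
    intro z hz
    simp [hF4, S2.pd1_zero hz, S2.pd2_zero hz]
  have hvan5 : ∀ z : ℂ, z ∉ tsupport u → F5 z = 0 := by
    intro z hz
    simp [hF5, S2.pd1_zero hz, S2.pd2_zero hz]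
  have hvan6 : ∀ z : ℂ, z ∉ tsupport u → F6 z = 0 := by
    intro z hz
    simp [hF6, image_eq_zero_of_notMem_tsupport hz]
  -- continuity of the integrands
  have hpd1c : Continuous (pd1 u) := (S2.contDiff_pd1 hu).continuous
  have hpd2c : Continuous (pd2 u) := (S2.contDiff_pd2 hu).continuous
  have hlapc : Continuous (lap u) :=
    ((S2.contDiff_pd1 (S2.contDiff_pd1 hu)).continuous.add
      (S2.contDiff_pd2 (S2.contDiff_pd2 hu)).continuous)
  have huc : Continuous u := hu.continuous
  have hct : ∀ z : ℂ, z ≠ 0 →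
      ContinuousAt F1 z ∧ ContinuousAt F2 z ∧ ContinuousAt F3 z ∧ ContinuousAt F4 z ∧
      ContinuousAt F5 z ∧ ContinuousAt F6 z := by
    intro z hz
    have habs : ‖z‖ ≠ 0 := norm_ne_zero_iff.mpr hz
    have hw : ContinuousAt (fun w : ℂ => ‖w‖ ^ α) z :=
      continuous_norm.continuousAt.rpow_const (Or.inl habs)
    have h2 : ContinuousAt (fun w : ℂ => ‖w‖ ^ (2 : ℕ)) z :=
      (continuous_norm.pow 2).continuousAt
    have h4 : ContinuousAt (fun w : ℂ => ‖w‖ ^ (4 : ℕ)) z :=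
      (continuous_norm.pow 4).continuousAt
    have h2ne : ‖z‖ ^ (2 : ℕ) ≠ 0 := pow_ne_zero _ habs
    have h4ne : ‖z‖ ^ (4 : ℕ) ≠ 0 := pow_ne_zero _ habs
    have hrad : ContinuousAt (fun w : ℂ => w.re * pd1 u w + w.im * pd2 u w) z :=
      (Complex.continuous_re.continuousAt.mul hpd1c.continuousAt).add
        (Complex.continuous_im.continuousAt.mul hpd2c.continuousAt)
    have hang : ContinuousAt (fun w : ℂ => w.re * pd2 u w - w.im * pd1 u w) z :=
      (Complex.continuous_re.continuousAt.mul hpd2c.continuousAt).sub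
        (Complex.continuous_im.continuousAt.mul hpd1c.continuousAt)
    refine ⟨?_, ?_, ?_, ?_, ?_, ?_⟩
    · exact (((hlapc.continuousAt.add ((continuousAt_const.mul hrad).div h2 h2ne)).add
        ((continuousAt_const.mul huc.continuousAt).div h2 h2ne)).pow 2).mul hw
    · exact ((hlapc.continuousAt.add
        ((continuousAt_const.mul huc.continuousAt).div h2 h2ne)).pow 2).mul hw
    · exact (((hrad.div h2 h2ne).sub (huc.continuousAt.div h2 h2ne)).pow 2).mul hw
    · exact ((hrad.div h2 h2ne).pow 2).mul hw
    · exact (((hang.pow 2)).div h4 h4ne).mul hw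
    · exact (((huc.continuousAt.pow 2)).div h4 h4ne).mul hw
  have hI2 : Integrable F2 := S2.integrable_aux hcs h0 (fun z hz => (hct z hz).2.1) hvan2
  have hI3 : Integrable F3 := S2.integrable_aux hcs h0 (fun z hz => (hct z hz).2.2.1) hvan3
  have hI4 : Integrable F4 := S2.integrable_aux hcs h0 (fun z hz => (hct z hz).2.2.2.1) hvan4
  have hI5 : Integrable F5 := S2.integrable_aux hcs h0 (fun z hz => (hct z hz).2.2.2.2.1) hvan5
  have hI6 : Integrable F6 := S2.integrable_aux hcs h0 (fun z hz => (hct z hz).2.2.2.2.2) hvan6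
  -- the vector field
  set C : ℝ := m ^ 2 - 1 + α + 2 with hCdef
  set P : ℂ → ℝ := S2.PP α C u with hPdef
  set Q : ℂ → ℝ := S2.QQ α C u with hQdef
  have hPsm : ContDiff ℝ (⊤ : ℕ∞) P := S2.contDiff_PP hu h0 α C
  have hQsm : ContDiff ℝ (⊤ : ℕ∞) Q := S2.contDiff_QQ hu h0 α C
  have hPsupp : HasCompactSupport P :=
    HasCompactSupport.intro hcs (fun z hz => S2.PP_zero hz)
  have hQsupp : HasCompactSupport Q :=
    HasCompactSupport.intro hcs (fun z hz => S2.QQ_zero hz)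
  have hdP0 : ∀ z : ℂ, z ∉ tsupport u → fderiv ℝ P z 1 = 0 := by
    intro z hz
    apply S2.fderiv_zero_of_eventually _ 1
    filter_upwards [((isClosed_tsupport u).isOpen_compl).mem_nhds hz] with w hw
    exact S2.PP_zero hw
  have hdQ0 : ∀ z : ℂ, z ∉ tsupport u → fderiv ℝ Q z Complex.I = 0 := by
    intro z hz
    apply S2.fderiv_zero_of_eventually _ Complex.I
    filter_upwards [((isClosed_tsupport u).isOpen_compl).mem_nhds hz] with w hw
    exact S2.QQ_zero hw
  have hIP : Integrable (fun z : ℂ => fderiv ℝ P z 1) := by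
    apply Continuous.integrable_of_hasCompactSupport
    · exact (S2.contDiff_pdv hPsm 1).continuous
    · exact HasCompactSupport.intro hcs hdP0
  have hIQ : Integrable (fun z : ℂ => fderiv ℝ Q z Complex.I) := by
    apply Continuous.integrable_of_hasCompactSupport
    · exact (S2.contDiff_pdv hQsm Complex.I).continuous
    · exact HasCompactSupport.intro hcs hdQ0
  have hintP : (∫ z : ℂ, fderiv ℝ P z 1) = 0 := S2.integral_pdv_eq_zero hPsm hPsupp 1
  have hintQ : (∫ z : ℂ, fderiv ℝ Q z Complex.I) = 0 := S2.integral_pdv_eq_zero hQsm hQsupp Complex.I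
  -- pointwise identity (nested form)
  have hpt : ∀ z : ℂ, F1 z =
      F2 z + ((4 * (m ^ 2 - 1)) * F3 z + ((-(2 * α * (m - 1))) * F4 z +
        ((2 * α * (m - 1)) * F5 z + ((-(2 * α * (m - 1) * (m ^ 2 - 1 + α))) * F6 z +
          (2 * (m - 1)) * (fderiv ℝ P z 1 + fderiv ℝ Q z Complex.I))))) := by
    intro z
    rcases eq_or_ne z 0 with rfl | hz
    · rw [hvan1 0 h0, hvan2 0 h0, hvan3 0 h0, hvan4 0 h0, hvan5 0 h0, hvan6 0 h0,
        hdP0 0 h0, hdQ0 0 h0]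
      ring
    · have := S2.key m α hu hz
      rw [hF1, hF2, hF3, hF4, hF5, hF6]
      simp only []
      rw [this, hPdef, hQdef, hCdef]
      ring
  -- pass from set integrals to integrals over ℂ
  rw [MeasureTheory.setIntegral_eq_integral_of_forall_compl_eq_zero
      (fun z hz => hvan1 z (hnot z hz)),
    MeasureTheory.setIntegral_eq_integral_of_forall_compl_eq_zero
      (fun z hz => hvan2 z (hnot z hz)),
    MeasureTheory.setIntegral_eq_integral_of_forall_compl_eq_zero
      (fun z hz => hvan3 z (hnot z hz)),
    MeasureTheory.setIntegral_eq_integral_of_forall_compl_eq_zero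
      (fun z hz => hvan4 z (hnot z hz)),
    MeasureTheory.setIntegral_eq_integral_of_forall_compl_eq_zero
      (fun z hz => hvan5 z (hnot z hz)),
    MeasureTheory.setIntegral_eq_integral_of_forall_compl_eq_zero
      (fun z hz => hvan6 z (hnot z hz))]
  -- split the integral
  calc (∫ z : ℂ, F1 z)
      = ∫ z : ℂ, (F2 z + ((4 * (m ^ 2 - 1)) * F3 z + ((-(2 * α * (m - 1))) * F4 z +
          ((2 * α * (m - 1)) * F5 z + ((-(2 * α * (m - 1) * (m ^ 2 - 1 + α))) * F6 z +
            (2 * (m - 1)) * (fderiv ℝ P z 1 + fderiv ℝ Q z Complex.I)))))) := by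
        exact integral_congr_ae (Filter.Eventually.of_forall hpt)
    _ = (∫ z : ℂ, F2 z) + (4 * (m ^ 2 - 1)) * (∫ z : ℂ, F3 z) +
          (-(2 * α * (m - 1))) * (∫ z : ℂ, F4 z) + (2 * α * (m - 1)) * (∫ z : ℂ, F5 z) +
          (-(2 * α * (m - 1) * (m ^ 2 - 1 + α))) * (∫ z : ℂ, F6 z) +
          (2 * (m - 1)) * ((∫ z : ℂ, fderiv ℝ P z 1) + (∫ z : ℂ, fderiv ℝ Q z Complex.I)) := by
        have hA6 : Integrable (fun z : ℂ =>
            (2 * (m - 1)) * (fderiv ℝ P z 1 + fderiv ℝ Q z Complex.I)) volume :=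
          (hIP.add hIQ).const_mul _
        have hA5 : Integrable (fun z : ℂ =>
            (-(2 * α * (m - 1) * (m ^ 2 - 1 + α))) * F6 z +
              (2 * (m - 1)) * (fderiv ℝ P z 1 + fderiv ℝ Q z Complex.I)) volume :=
          (hI6.const_mul _).add hA6
        have hA4 : Integrable (fun z : ℂ =>
            (2 * α * (m - 1)) * F5 z + ((-(2 * α * (m - 1) * (m ^ 2 - 1 + α))) * F6 z +
              (2 * (m - 1)) * (fderiv ℝ P z 1 + fderiv ℝ Q z Complex.I))) volume :=
          (hI5.const_mul _).add hA5
        have hA3 : Integrable (fun z : ℂ =>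
            (-(2 * α * (m - 1))) * F4 z + ((2 * α * (m - 1)) * F5 z +
              ((-(2 * α * (m - 1) * (m ^ 2 - 1 + α))) * F6 z +
              (2 * (m - 1)) * (fderiv ℝ P z 1 + fderiv ℝ Q z Complex.I)))) volume :=
          (hI4.const_mul _).add hA4
        have hA2 : Integrable (fun z : ℂ =>
            (4 * (m ^ 2 - 1)) * F3 z + ((-(2 * α * (m - 1))) * F4 z + ((2 * α * (m - 1)) * F5 z +
              ((-(2 * α * (m - 1) * (m ^ 2 - 1 + α))) * F6 z +
              (2 * (m - 1)) * (fderiv ℝ P z 1 + fderiv ℝ Q z Complex.I))))) volume :=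
          (hI3.const_mul _).add hA3
        rw [integral_add hI2 hA2, integral_add (hI3.const_mul _) hA3,
          integral_add (hI4.const_mul _) hA4, integral_add (hI5.const_mul _) hA5,
          integral_add (hI6.const_mul _) hA6]
        simp only [integral_const_mul]
        rw [integral_add hIP hIQ]
        ring
    _ = (∫ z : ℂ, F2 z) + 4 * (m ^ 2 - 1) * (∫ z : ℂ, F3 z) -
          2 * α * (m - 1) * (∫ z : ℂ, F4 z) + 2 * α * (m - 1) * (∫ z : ℂ, F5 z) -
          2 * α * (m - 1) * (m ^ 2 - 1 + α) * (∫ z : ℂ, F6 z) := by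
        rw [hintP, hintQ]; ring
end
end

section
/- Let α ≠ 2 be a real number, let 0 < a < b, and let Ω = {x ∈ ℝ² : a < |x| < b}. Every smooth function u : ℝ² → ℝ whose closed support is a compact subset of Ω satisfies ∫_Ω (u(x)²/|x|⁴)·|x|^α dx ≤ (4/(α−2)²)·∫_Ω ((x·∇u(x))/|x|²)²·|x|^α dx. -/
open MeasureTheory

noncomputable section

section Aux

open Complex Filter
namespace S3Aux

def chi (a : ℝ) (z : ℂ) : ℝ := Real.smoothTransition ((Complex.normSq z - a^2/4) / (a^2/2))
def Wt (α a : ℝ) (z : ℂ) : ℝ := chi a z * Complex.normSq z ^ ((α-4)/2)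

lemma Wt_nonneg (α a : ℝ) (z : ℂ) : 0 ≤ Wt α a z :=
  mul_nonneg (Real.smoothTransition.nonneg _) (Real.rpow_nonneg (Complex.normSq_nonneg z) _)

lemma chi_eq_one {a : ℝ} (ha : 0 < a) {z : ℂ} (hz : 3*a^2/4 ≤ Complex.normSq z) :
    chi a z = 1 := by
  apply Real.smoothTransition.one_of_one_le
  rw [le_div_iff₀ (by positivity)]
  nlinarith

lemma contDiff_normSq : ContDiff ℝ (⊤ : ℕ∞) (Complex.normSq : ℂ → ℝ) := by
  have : (Complex.normSq : ℂ → ℝ)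
      = fun z => Complex.reCLM z * Complex.reCLM z + Complex.imCLM z * Complex.imCLM z := by
    ext z; simp [Complex.normSq_apply]
  rw [this]
  exact (Complex.reCLM.contDiff.mul Complex.reCLM.contDiff).add
    (Complex.imCLM.contDiff.mul Complex.imCLM.contDiff)

lemma contDiff_chi (a : ℝ) : ContDiff ℝ (⊤ : ℕ∞) (chi a) :=
  (Real.smoothTransition.contDiff (n := ⊤)).comp
    (((contDiff_normSq.sub contDiff_const).div_const _))

lemma hasFDerivAt_normSq (z : ℂ) : HasFDerivAt Complex.normSq
    ((2*z.re) • (Complex.reCLM : ℂ →L[ℝ] ℝ) + (2*z.im) • Complex.imCLM) z := by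
  have h1 := (Complex.reCLM.hasFDerivAt (x := z)).mul (Complex.reCLM.hasFDerivAt (x := z))
  have h2 := (Complex.imCLM.hasFDerivAt (x := z)).mul (Complex.imCLM.hasFDerivAt (x := z))
  have h := h1.add h2
  have e1 : (Complex.normSq : ℂ → ℝ)
      = fun w => Complex.reCLM w * Complex.reCLM w + Complex.imCLM w * Complex.imCLM w := by
    ext w; simp [Complex.normSq_apply]
  rw [e1]
  refine h.congr_fderiv ?_
  ext w
  simp only [ContinuousLinearMap.add_apply, ContinuousLinearMap.smul_apply,
    Complex.reCLM_apply, Complex.imCLM_apply, smul_eq_mul]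
  ring

lemma hasFDerivAt_rpow_normSq {z : ℂ} (hz : Complex.normSq z ≠ 0) (p : ℝ) :
    HasFDerivAt (fun w => Complex.normSq w ^ p)
      ((p * Complex.normSq z ^ (p-1)) •
        ((2*z.re) • (Complex.reCLM : ℂ →L[ℝ] ℝ) + (2*z.im) • Complex.imCLM)) z :=
  (Real.hasDerivAt_rpow_const (Or.inl hz)).comp_hasFDerivAt z (hasFDerivAt_normSq z)

/-- The set where the cutoff is 1. -/
lemma isOpen_T (a : ℝ) : IsOpen {z : ℂ | 3*a^2/4 < Complex.normSq z} :=
  isOpen_lt continuous_const Complex.continuous_normSq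

lemma Wt_eventuallyEq {α a : ℝ} (ha : 0 < a) {z : ℂ} (hz : 3*a^2/4 < Complex.normSq z) :
    Wt α a =ᶠ[nhds z] fun w => Complex.normSq w ^ ((α-4)/2) := by
  filter_upwards [(isOpen_T a).mem_nhds hz] with w hw
  simp only [Wt, chi_eq_one ha (le_of_lt hw), one_mul]

lemma normSq_pos_of_T {a : ℝ} (ha : 0 < a) {z : ℂ} (hz : 3*a^2/4 < Complex.normSq z) :
    0 < Complex.normSq z := lt_of_le_of_lt (by positivity) hz

lemma hasFDerivAt_Wt {α a : ℝ} (ha : 0 < a) {z : ℂ} (hz : 3*a^2/4 < Complex.normSq z) :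
    HasFDerivAt (Wt α a)
      (((α-4)/2 * Complex.normSq z ^ ((α-4)/2-1)) •
        ((2*z.re) • (Complex.reCLM : ℂ →L[ℝ] ℝ) + (2*z.im) • Complex.imCLM)) z :=
  (hasFDerivAt_rpow_normSq (normSq_pos_of_T ha hz).ne' _).congr_of_eventuallyEq
    (Wt_eventuallyEq ha hz)

lemma differentiable_Wt (α : ℝ) {a : ℝ} (ha : 0 < a) : Differentiable ℝ (Wt α a) := by
  intro z
  rcases lt_or_ge (Complex.normSq z) (a^2/4) with h | h
  · have hev : Wt α a =ᶠ[nhds z] fun _ => (0:ℝ) := by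
      filter_upwards [(isOpen_lt Complex.continuous_normSq continuous_const).mem_nhds h] with w hw
      have : chi a w = 0 := by
        apply Real.smoothTransition.zero_of_nonpos
        apply div_nonpos_of_nonpos_of_nonneg <;> [linarith [hw]; positivity]
      simp [Wt, this]
    exact (differentiableAt_const (0:ℝ)).congr_of_eventuallyEq hev
  · have hz : Complex.normSq z ≠ 0 := ne_of_gt (lt_of_lt_of_le (by positivity) h)
    exact ((contDiff_chi a).differentiable (by simp) z).mul
      (hasFDerivAt_rpow_normSq hz _).differentiableAt


def V1 (α a : ℝ) (z : ℂ) : ℝ := z.re * Wt α a z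
def V2 (α a : ℝ) (z : ℂ) : ℝ := z.im * Wt α a z

lemma differentiable_V1 (α : ℝ) {a : ℝ} (ha : 0 < a) : Differentiable ℝ (V1 α a) :=
  (Complex.reCLM.differentiable).mul (differentiable_Wt α ha)

lemma differentiable_V2 (α : ℝ) {a : ℝ} (ha : 0 < a) : Differentiable ℝ (V2 α a) :=
  (Complex.imCLM.differentiable).mul (differentiable_Wt α ha)

lemma fderiv_V1_apply {α a : ℝ} (ha : 0 < a) {z : ℂ} (hz : 3*a^2/4 < Complex.normSq z) :
    fderiv ℝ (V1 α a) z 1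
      = Wt α a z + (α-4) * Complex.normSq z ^ ((α-4)/2-1) * z.re^2 := by
  have h : HasFDerivAt (V1 α a) _ z :=
    (Complex.reCLM.hasFDerivAt (x := z)).mul (hasFDerivAt_Wt ha hz)
  rw [h.fderiv]
  simp only [ContinuousLinearMap.add_apply, ContinuousLinearMap.smul_apply,
    ContinuousLinearMap.coe_smul', Pi.smul_apply, Complex.reCLM_apply, Complex.imCLM_apply,
    smul_eq_mul, Complex.one_re, Complex.one_im]
  ring

lemma fderiv_V2_apply {α a : ℝ} (ha : 0 < a) {z : ℂ} (hz : 3*a^2/4 < Complex.normSq z) :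
    fderiv ℝ (V2 α a) z Complex.I
      = Wt α a z + (α-4) * Complex.normSq z ^ ((α-4)/2-1) * z.im^2 := by
  have h : HasFDerivAt (V2 α a) _ z :=
    (Complex.imCLM.hasFDerivAt (x := z)).mul (hasFDerivAt_Wt ha hz)
  rw [h.fderiv]
  simp only [ContinuousLinearMap.add_apply, ContinuousLinearMap.smul_apply,
    ContinuousLinearMap.coe_smul', Pi.smul_apply, Complex.reCLM_apply, Complex.imCLM_apply,
    smul_eq_mul, Complex.I_re, Complex.I_im]
  ring

lemma fderiv_sum {α a : ℝ} (ha : 0 < a) {z : ℂ} (hz : 3*a^2/4 < Complex.normSq z) :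
    fderiv ℝ (V1 α a) z 1 + fderiv ℝ (V2 α a) z Complex.I = (α-2) * Wt α a z := by
  rw [fderiv_V1_apply ha hz, fderiv_V2_apply ha hz]
  have h0 : Complex.normSq z ≠ 0 := (normSq_pos_of_T ha hz).ne'
  have h1 : Complex.normSq z ^ ((α-4)/2-1) * Complex.normSq z
      = Complex.normSq z ^ ((α-4)/2) := by
    rw [← Real.rpow_add_one h0]
    norm_num
  have h2 : Wt α a z = Complex.normSq z ^ ((α-4)/2) := by
    simp [Wt, chi_eq_one ha hz.le]
  have h3 : z.re^2 + z.im^2 = Complex.normSq z := by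
    rw [Complex.normSq_apply]; ring
  linear_combination (α-4) * Complex.normSq z ^ ((α-4)/2-1) * h3 + (α-4) * h1 + (4-α) * h2

lemma continuousAt_Wt {α a : ℝ} {z : ℂ} (hz : Complex.normSq z ≠ 0) :
    ContinuousAt (Wt α a) z :=
  ((contDiff_chi a).continuous.continuousAt).mul
    ((Real.continuousAt_rpow_const _ _ (Or.inl hz)).comp Complex.continuous_normSq.continuousAt)

lemma continuousAt_rpow_normSq {q : ℝ} {z : ℂ} (hz : Complex.normSq z ≠ 0) :
    ContinuousAt (fun w => Complex.normSq w ^ q) z :=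
  (Real.continuousAt_rpow_const _ _ (Or.inl hz)).comp Complex.continuous_normSq.continuousAt

lemma continuousAt_fderivV1 {α a : ℝ} (ha : 0 < a) {z : ℂ}
    (hz : 3*a^2/4 < Complex.normSq z) :
    ContinuousAt (fun w => fderiv ℝ (V1 α a) w 1) z := by
  have h0 := normSq_pos_of_T ha hz
  have hc : ContinuousAt
      (fun w : ℂ => Wt α a w + (α-4) * Complex.normSq w ^ ((α-4)/2-1) * w.re^2) z :=
    (continuousAt_Wt h0.ne').add
      (((continuousAt_const.mul (continuousAt_rpow_normSq h0.ne')).mul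
        ((Complex.continuous_re.continuousAt).pow 2)))
  apply hc.congr
  filter_upwards [(isOpen_T a).mem_nhds hz] with w hw
  exact (fderiv_V1_apply ha hw).symm

lemma continuousAt_fderivV2 {α a : ℝ} (ha : 0 < a) {z : ℂ}
    (hz : 3*a^2/4 < Complex.normSq z) :
    ContinuousAt (fun w => fderiv ℝ (V2 α a) w Complex.I) z := by
  have h0 := normSq_pos_of_T ha hz
  have hc : ContinuousAt
      (fun w : ℂ => Wt α a w + (α-4) * Complex.normSq w ^ ((α-4)/2-1) * w.im^2) z :=
    (continuousAt_Wt h0.ne').add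
      (((continuousAt_const.mul (continuousAt_rpow_normSq h0.ne')).mul
        ((Complex.continuous_im.continuousAt).pow 2)))
  apply hc.congr
  filter_upwards [(isOpen_T a).mem_nhds hz] with w hw
  exact (fderiv_V2_apply ha hw).symm


lemma integrable_of_support {u : ℂ → ℝ} (hcs : IsCompact (tsupport u)) {f : ℂ → ℝ}
    (hsupp : Function.support f ⊆ tsupport u)
    (hcont : ∀ z ∈ tsupport u, ContinuousAt f z) : Integrable f := by
  have hclosed : IsClosed (tsupport u) := isClosed_closure
  have hts : tsupport f ⊆ tsupport u := closure_minimal hsupp hclosed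
  have hcf : HasCompactSupport f := IsCompact.of_isClosed_subset hcs isClosed_closure hts
  have hc : Continuous f := by
    rw [continuous_iff_continuousAt]; intro z
    by_cases hz : z ∈ tsupport u
    · exact hcont z hz
    · have hev : ∀ᶠ w in nhds z, f w = 0 := by
        filter_upwards [hclosed.isOpen_compl.mem_nhds hz] with w hw
        by_contra h
        exact hw (hsupp (Function.mem_support.2 h))
      exact (continuousAt_const (y := (0:ℝ))).congr (hev.mono fun w hw => hw.symm)
  exact hc.integrable_of_hasCompactSupport hcf

end S3Aux
end Aux

open S3Aux Complex Filter in
/-- Weighted Hardy-type inequality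
`∫ u²/|x|⁴ |x|^α ≤ (4/(α−2)²) ∫ ((x·∇u)/|x|²)² |x|^α` on the annulus, for `α ≠ 2`. -/
theorem statement3 (α : ℝ) (hα : α ≠ 2) (a b : ℝ) (ha : 0 < a) (hab : a < b)
    (u : ℂ → ℝ) (hu : ContDiff ℝ (⊤ : ℕ∞) u) (hcs : IsCompact (tsupport u))
    (hsupp : tsupport u ⊆ ann a b) :
    (∫ z in ann a b, u z ^ 2 / ‖z‖ ^ 4 * ‖z‖ ^ α) ≤
      4 / (α - 2) ^ 2 *
        (∫ z in ann a b,
          ((z.re * pd1 u z + z.im * pd2 u z) / ‖z‖ ^ 2) ^ 2 *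
            ‖z‖ ^ α) := by
  have hW : ∀ z, Wt α a z = Wt α a z := fun _ => rfl
  set W : ℂ → ℝ := Wt α a with hW_def
  set du : ℂ → ℝ := fun z => z.re * fderiv ℝ u z 1 + z.im * fderiv ℝ u z Complex.I with hdu_def
  have hdiffu : Differentiable ℝ u := hu.differentiable (by simp)
  have hu2 : Differentiable ℝ (fun z : ℂ => u z ^ 2) := by
    have e : (fun z : ℂ => u z ^ 2) = fun z => u z * u z := by ext z; ring
    rw [e]; exact hdiffu.mul hdiffu
  have hcontu : Continuous u := hu.continuous
  have hcfd : Continuous (fderiv ℝ u) := hu.continuous_fderiv (by simp)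
  have hcdu : Continuous du := by
    apply Continuous.add
    · exact continuous_re.mul (hcfd.clm_apply continuous_const)
    · exact continuous_im.mul (hcfd.clm_apply continuous_const)
  -- support facts
  have hfd_zero : ∀ z ∉ tsupport u, fderiv ℝ u z = 0 := by
    intro z hz
    by_contra h
    exact hz (support_fderiv_subset ℝ (Function.mem_support.2 h))
  have hu_zero : ∀ z ∉ tsupport u, u z = 0 := fun z hz => image_eq_zero_of_notMem_tsupport hz
  have hT : ∀ z ∈ tsupport u, 3*a^2/4 < Complex.normSq z := by
    intro z hz
    obtain ⟨h1, _⟩ := hsupp hz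
    have h2 : a^2 < ‖z‖ ^ 2 := by nlinarith [ha, h1]
    rw [Complex.sq_norm] at h2
    nlinarith
  have hTne : ∀ z ∈ tsupport u, Complex.normSq z ≠ 0 := fun z hz =>
    (normSq_pos_of_T ha (hT z hz)).ne'
  -- fderiv of u^2
  have hfd2 : ∀ (z : ℂ) (v : ℂ), fderiv ℝ (fun x => u x ^ 2) z v = 2 * u z * fderiv ℝ u z v := by
    intro z v
    have e : (fun x : ℂ => u x ^ 2) = fun x => u x * u x := by ext x; ring
    have h := ((hdiffu z).hasFDerivAt.mul (hdiffu z).hasFDerivAt)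
    rw [e, show (fun x => u x * u x) = u * u from rfl, h.fderiv]
    simp only [ContinuousLinearMap.add_apply, ContinuousLinearMap.coe_smul', Pi.smul_apply,
      smul_eq_mul]
    ring
  -- Integrability
  have hsuppA : ∀ {f : ℂ → ℝ}, (∀ z, u z = 0 → f z = 0) → Function.support f ⊆ tsupport u := by
    intro f hf z hz
    by_contra h
    exact hz (hf z (hu_zero z h))
  have hIA : Integrable (fun z => u z ^ 2 * W z) := by
    apply integrable_of_support hcs (hsuppA (by intro z h; simp [h]))
    intro z hz
    exact ((hcontu.continuousAt).pow 2).mul (continuousAt_Wt (hTne z hz))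
  have hIB : Integrable (fun z => du z ^ 2 * W z) := by
    apply integrable_of_support hcs
    · intro z hz
      by_contra h
      apply Function.mem_support.1 hz
      have h0 : fderiv ℝ u z = 0 := hfd_zero z h
      show (z.re * fderiv ℝ u z 1 + z.im * fderiv ℝ u z Complex.I) ^ 2 * W z = 0
      rw [h0]; simp
    · intro z hz
      exact ((hcdu.continuousAt).pow 2).mul (continuousAt_Wt (hTne z hz))
  have hIC : Integrable (fun z => u z * du z * W z) := by
    apply integrable_of_support hcs (hsuppA (by intro z h; simp [h]))
    intro z hz
    exact ((hcontu.continuousAt).mul hcdu.continuousAt).mul (continuousAt_Wt (hTne z hz))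
  have hI1 : Integrable (fun z => u z ^ 2 * fderiv ℝ (V1 α a) z 1) := by
    apply integrable_of_support hcs (hsuppA (by intro z h; simp [h]))
    intro z hz
    exact ((hcontu.continuousAt).pow 2).mul (continuousAt_fderivV1 ha (hT z hz))
  have hI2 : Integrable (fun z => u z ^ 2 * fderiv ℝ (V2 α a) z Complex.I) := by
    apply integrable_of_support hcs (hsuppA (by intro z h; simp [h]))
    intro z hz
    exact ((hcontu.continuousAt).pow 2).mul (continuousAt_fderivV2 ha (hT z hz))
  have hI3 : Integrable (fun z => fderiv ℝ (fun x => u x ^ 2) z 1 * V1 α a z) := by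
    have e : (fun z => fderiv ℝ (fun x => u x ^ 2) z 1 * V1 α a z)
        = fun z => (2 * u z * fderiv ℝ u z 1) * (z.re * W z) := by
      ext z; rw [hfd2]; rfl
    rw [e]
    apply integrable_of_support hcs (hsuppA (by intro z h; simp [h]))
    intro z hz
    exact ((continuous_const.mul hcontu).continuousAt.mul
      ((hcfd.clm_apply continuous_const).continuousAt)).mul
      (continuous_re.continuousAt.mul (continuousAt_Wt (hTne z hz)))
  have hI4 : Integrable (fun z => fderiv ℝ (fun x => u x ^ 2) z Complex.I * V2 α a z) := by
    have e : (fun z => fderiv ℝ (fun x => u x ^ 2) z Complex.I * V2 α a z)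
        = fun z => (2 * u z * fderiv ℝ u z Complex.I) * (z.im * W z) := by
      ext z; rw [hfd2]; rfl
    rw [e]
    apply integrable_of_support hcs (hsuppA (by intro z h; simp [h]))
    intro z hz
    exact ((continuous_const.mul hcontu).continuousAt.mul
      ((hcfd.clm_apply continuous_const).continuousAt)).mul
      (continuous_im.continuousAt.mul (continuousAt_Wt (hTne z hz)))
  have hI5 : Integrable (fun z => u z ^ 2 * V1 α a z) := by
    apply integrable_of_support hcs (hsuppA (by intro z h; simp [h]))
    intro z hz
    exact ((hcontu.continuousAt).pow 2).mul
      (continuous_re.continuousAt.mul (continuousAt_Wt (hTne z hz)))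
  have hI6 : Integrable (fun z => u z ^ 2 * V2 α a z) := by
    apply integrable_of_support hcs (hsuppA (by intro z h; simp [h]))
    intro z hz
    exact ((hcontu.continuousAt).pow 2).mul
      (continuous_im.continuousAt.mul (continuousAt_Wt (hTne z hz)))
  -- quantities
  set A : ℝ := ∫ z, u z ^ 2 * W z with hA_def
  set B : ℝ := ∫ z, du z ^ 2 * W z with hB_def
  set C : ℝ := ∫ z, u z * du z * W z with hC_def
  -- Integration by parts
  have ibp1 := integral_mul_fderiv_eq_neg_fderiv_mul_of_integrable (μ := volume) (v := (1 : ℂ))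
    hI3 hI1 hI5 (fun x _ => hu2 x) (fun x _ => differentiable_V1 α ha x)
  have ibp2 := integral_mul_fderiv_eq_neg_fderiv_mul_of_integrable (μ := volume)
    (v := Complex.I) hI4 hI2 hI6 (fun x _ => hu2 x) (fun x _ => differentiable_V2 α ha x)
  -- Key identity : (α-2) * A = -(2*C)
  have key : (α - 2) * A = -(2 * C) := by
    have step1 : (α - 2) * A
        = ∫ z, (u z ^ 2 * fderiv ℝ (V1 α a) z 1 + u z ^ 2 * fderiv ℝ (V2 α a) z Complex.I) := by
      rw [hA_def, ← integral_const_mul]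
      apply integral_congr_ae
      apply Eventually.of_forall
      intro z
      by_cases hz : z ∈ tsupport u
      · have hs := fderiv_sum (α := α) ha (hT z hz)
        show (α - 2) * (u z ^ 2 * W z)
          = u z ^ 2 * fderiv ℝ (V1 α a) z 1 + u z ^ 2 * fderiv ℝ (V2 α a) z Complex.I
        rw [← mul_add, hs]
        show (α - 2) * (u z ^ 2 * Wt α a z) = u z ^ 2 * ((α - 2) * Wt α a z)
        ring
      · show (α - 2) * (u z ^ 2 * W z) = _
        simp [hu_zero z hz]
    have step2 : (∫ z, (u z ^ 2 * fderiv ℝ (V1 α a) z 1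
          + u z ^ 2 * fderiv ℝ (V2 α a) z Complex.I))
        = -(∫ z, (fderiv ℝ (fun x => u x ^ 2) z 1 * V1 α a z
          + fderiv ℝ (fun x => u x ^ 2) z Complex.I * V2 α a z)) := by
      rw [integral_add hI1 hI2, ibp1, ibp2, integral_add hI3 hI4]
      ring
    have step3 : (∫ z, (fderiv ℝ (fun x => u x ^ 2) z 1 * V1 α a z
          + fderiv ℝ (fun x => u x ^ 2) z Complex.I * V2 α a z))
        = 2 * C := by
      rw [hC_def, ← integral_const_mul]
      apply integral_congr_ae
      apply Eventually.of_forall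
      intro z
      show fderiv ℝ (fun x => u x ^ 2) z 1 * V1 α a z
          + fderiv ℝ (fun x => u x ^ 2) z Complex.I * V2 α a z
        = 2 * (u z * du z * W z)
      rw [hfd2, hfd2]
      show 2 * u z * fderiv ℝ u z 1 * (z.re * Wt α a z)
          + 2 * u z * fderiv ℝ u z Complex.I * (z.im * Wt α a z)
        = 2 * (u z * (z.re * fderiv ℝ u z 1 + z.im * fderiv ℝ u z Complex.I) * Wt α a z)
      ring
    rw [step1, step2, step3]
  -- Cauchy-Schwarz via the discriminant
  have hquad : ∀ t : ℝ, 0 ≤ B * (t * t) + (2 * C) * t + A := by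
    intro t
    have e : (fun z => (t * du z + u z)^2 * W z)
        = fun z => (t*t) * (du z^2 * W z) + ((2*t) * (u z * du z * W z) + u z^2 * W z) := by
      ext z; ring
    have hint : ∫ z, (t * du z + u z)^2 * W z = B*(t*t) + (2*C)*t + A := by
      have hg1 : Integrable (fun z => (2*t) * (u z * du z * W z) + u z^2 * W z) :=
        (hIC.const_mul (2*t)).add hIA
      have hg0 : Integrable (fun z => (t*t) * (du z^2 * W z)) := hIB.const_mul (t*t)
      have hg2 : Integrable (fun z => (2*t) * (u z * du z * W z)) := hIC.const_mul (2*t)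
      rw [e]
      rw [integral_add hg0 hg1]
      rw [integral_add hg2 hIA]
      rw [integral_const_mul, integral_const_mul, ← hA_def, ← hB_def, ← hC_def]
      ring
    rw [← hint]
    exact integral_nonneg fun z => mul_nonneg (sq_nonneg _) (Wt_nonneg α a z)
  have hdisc : discrim B (2*C) A ≤ 0 := discrim_le_zero hquad
  rw [discrim] at hdisc
  have hA0 : 0 ≤ A := integral_nonneg fun z => mul_nonneg (sq_nonneg _) (Wt_nonneg α a z)
  have hB0 : 0 ≤ B := integral_nonneg fun z => mul_nonneg (sq_nonneg _) (Wt_nonneg α a z)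
  -- rewriting the set integrals
  have hmeas : MeasurableSet (ann a b) := by
    have e : ann a b = (fun z : ℂ => ‖z‖) ⁻¹' (Set.Ioo a b) := rfl
    rw [e]; exact (isOpen_Ioo.preimage continuous_norm).measurableSet
  have hWann : ∀ z ∈ ann a b, W z = ‖z‖ ^ α / ‖z‖ ^ 4 := by
    intro z hz
    have h0 : (0:ℝ) < ‖z‖ := lt_trans ha hz.1
    have hsq : Complex.normSq z = ‖z‖ ^ (2:ℕ) := (Complex.sq_norm z).symm
    have hT' : 3*a^2/4 < Complex.normSq z := by
      rw [hsq]; push_cast; nlinarith [hz.1, ha]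
    have e1 : W z = ‖z‖ ^ (α - 4) := by
      show Wt α a z = _
      rw [Wt, chi_eq_one ha hT'.le, one_mul, hsq,
        ← Real.rpow_natCast (‖z‖) 2, ← Real.rpow_mul h0.le]
      congr 1
      push_cast
      ring
    rw [e1, ← Real.rpow_natCast (‖z‖) 4, ← Real.rpow_sub h0]
    norm_num
  have hLHS : (∫ z in ann a b, u z ^ 2 / ‖z‖ ^ 4 * ‖z‖ ^ α) = A := by
    have e1 : (∫ z in ann a b, u z ^ 2 / ‖z‖ ^ 4 * ‖z‖ ^ α)
        = ∫ z in ann a b, u z ^ 2 * W z := by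
      apply setIntegral_congr_fun hmeas
      intro z hz
      have h0 : (0:ℝ) < ‖z‖ := lt_trans ha hz.1
      show u z ^ 2 / ‖z‖ ^ 4 * ‖z‖ ^ α = u z ^ 2 * W z
      rw [hWann z hz, div_mul_eq_mul_div, mul_div_assoc]
    rw [e1, hA_def]
    exact setIntegral_eq_integral_of_forall_compl_eq_zero (fun z hz => by
      have h0 : u z = 0 := hu_zero z (fun hm => hz (hsupp hm))
      simp [h0])
  have hRHS : (∫ z in ann a b,
      ((z.re * pd1 u z + z.im * pd2 u z) / ‖z‖ ^ 2) ^ 2 * ‖z‖ ^ α)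
      = B := by
    have e1 : (∫ z in ann a b,
        ((z.re * pd1 u z + z.im * pd2 u z) / ‖z‖ ^ 2) ^ 2 * ‖z‖ ^ α)
        = ∫ z in ann a b, du z ^ 2 * W z := by
      apply setIntegral_congr_fun hmeas
      intro z hz
      have h0 : (0:ℝ) < ‖z‖ := lt_trans ha hz.1
      show ((z.re * pd1 u z + z.im * pd2 u z) / ‖z‖ ^ 2) ^ 2 * ‖z‖ ^ α
        = du z ^ 2 * W z
      rw [hWann z hz]
      show ((z.re * fderiv ℝ u z 1 + z.im * fderiv ℝ u z Complex.I) / ‖z‖ ^ 2) ^ 2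
          * ‖z‖ ^ α
        = (z.re * fderiv ℝ u z 1 + z.im * fderiv ℝ u z Complex.I) ^ 2
          * (‖z‖ ^ α / ‖z‖ ^ 4)
      rw [div_pow, div_mul_eq_mul_div, mul_div_assoc, ← pow_mul]
    rw [e1, hB_def]
    exact setIntegral_eq_integral_of_forall_compl_eq_zero (fun z hz => by
      have h0 : fderiv ℝ u z = 0 := hfd_zero z (fun hm => hz (hsupp hm))
      show (z.re * fderiv ℝ u z 1 + z.im * fderiv ℝ u z Complex.I) ^ 2 * W z = 0
      rw [h0]; simp)
  rw [hLHS, hRHS]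
  -- conclusion
  have hα2 : α - 2 ≠ 0 := sub_ne_zero.2 hα
  have hp2 : (0:ℝ) < (α-2)^2 := by positivity
  rcases hA0.eq_or_lt with h | h
  · rw [← h]
    exact mul_nonneg (by positivity) hB0
  · have hkey2 : ((α-2) * A)^2 = (2*C) * (2*C) := by rw [key]; ring
    rw [div_mul_eq_mul_div, le_div_iff₀ hp2]
    nlinarith [hkey2, hdisc, h, hB0]
end
end

section
/- Let 0 < a < b ≤ e^{-1} and let γ > 0. Define f₁(r) = r^{γ−1/2}·log r and f₂(r) = r^{γ−1/2} for r > 0, and set D = (1 − (a/b)^{2γ})² − 4γ²·(a/b)^{2γ}·(log(b/a))². Then D > 0, and for every λ > 0 one has λ·b^{2γ}/log(1/b) ≤ (8γ²(1+γ)/D)·∫_a^b (f₁(r) + λ·f₂(r))² dr. -/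
open MeasureTheory

set_option maxHeartbeats 1000000 in
private lemma statement8_quad (u v L M γ D l : ℝ) (hv : 0 < v) (huv : v < u) (hM : M < L)
    (hL : L ≤ -1) (hγ : 0 < γ) (hD : 0 < D)
    (hDu : u ^ 2 * D = (u - v) ^ 2 - 4 * γ ^ 2 * u * v * (L - M) ^ 2)
    (hl : 0 < l) :
    l * u * γ * D ≤ 2 * (1 + γ) * (-L) *
      ((u * (2*γ^2*L^2 - 2*γ*L + 1) - v * (2*γ^2*M^2 - 2*γ*M + 1))
       + 2*γ*l*(u * (2*γ*L - 1) - v * (2*γ*M - 1)) + 2*γ^2*l^2*(u - v)) := by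
  have hu : 0 < u := hv.trans huv
  set ℓ := -L with hℓdef
  set A' := u * (2*γ^2*L^2 - 2*γ*L + 1) - v * (2*γ^2*M^2 - 2*γ*M + 1) with hA
  set B' := u * (2*γ*L - 1) - v * (2*γ*M - 1) with hB
  set C' := u - v with hC
  have hℓ : 1 ≤ ℓ := by rw [hℓdef]; linarith
  have hM0 : M < 0 := by linarith
  have hid : 2 * A' * C' - B' ^ 2 = u ^ 2 * D := by rw [hDu, hA, hB, hC]; ring
  have hQnn : 0 ≤ 2*γ^2*M^2 - 2*γ*M + 1 := by nlinarith [sq_nonneg (γ*M - 1), sq_nonneg (γ*M)]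
  have hA'le : A' ≤ u * (2*γ^2*ℓ^2 + 2*γ*ℓ + 1) := by
    rw [hA, hℓdef]; nlinarith [mul_nonneg hv.le hQnn]
  have hC'le : C' ≤ u := by rw [hC]; linarith
  have hC'pos : 0 < C' := by rw [hC]; linarith
  have hBle : -B' ≤ u * (1 + 2*γ*ℓ) := by
    rw [hB, hℓdef]
    have h0 : 0 < 1 - 2*γ*M := by nlinarith
    have : 0 < v * (1 - 2*γ*M) := mul_pos hv h0
    nlinarith
  clear_value A' B' C' ℓ
  clear hA hB hC hℓdef hDu
  set P := 2*γ^2*ℓ^2 + 2*γ*ℓ + 1 with hP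
  have hPnn : 0 ≤ P := by positivity
  have hACnn : 0 ≤ 2 * A' * C' := by nlinarith [sq_nonneg B', mul_pos (pow_pos hu 2) hD]
  set S := Real.sqrt (2 * A' * C') with hSdef
  have hS2 : S ^ 2 = 2 * A' * C' := Real.sq_sqrt hACnn
  have hSnn : 0 ≤ S := Real.sqrt_nonneg _
  clear_value S P
  clear hSdef
  have hSB : B' < S := by
    by_contra h
    push_neg at h
    have h2 : S * S ≤ B' * B' := mul_self_le_mul_self hSnn h
    nlinarith [mul_pos (pow_pos hu 2) hD]
  have hSle : S ≤ u * Real.sqrt (2 * P) := by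
    have h1 : 2 * A' * C' ≤ u ^ 2 * (2 * P) := by nlinarith [mul_nonneg hu.le hPnn]
    have := Real.sqrt_le_sqrt h1
    rw [← hS2, Real.sqrt_sq hSnn, Real.sqrt_mul (sq_nonneg u), Real.sqrt_sq hu.le] at this
    exact this
  have hsqP : Real.sqrt (2 * P) ≤ (4 + 2*γ)*ℓ - 1 := by
    have hR : 0 ≤ (4 + 2*γ)*ℓ - 1 := by nlinarith
    have h2 : 2 * P ≤ ((4 + 2*γ)*ℓ - 1) ^ 2 := by rw [hP]; nlinarith
    have := Real.sqrt_le_sqrt h2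
    rwa [Real.sqrt_sq hR] at this
  have hℓpos : 0 < ℓ := by linarith
  have hSmB : S - B' ≤ 4 * (1 + γ) * ℓ * u := by nlinarith [hSle, hsqP, hBle, hu]
  have hSmBpos : 0 < S - B' := by linarith
  have hsum : 0 < S + B' := by nlinarith [mul_pos (pow_pos hu 2) hD]
  have hup : u * D ≤ 4 * (1 + γ) * ℓ * (S + B') := by nlinarith [hsum, hSmB, hSmBpos]
  have hdisc : (γ * (4*(1+γ)*ℓ*B' - u*D)) ^ 2 ≤
      4 * (4*(1+γ)*ℓ*γ^2*C') * (2*(1+γ)*ℓ*A') := by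
    have hub : 4*(1+γ)*ℓ*B' - u*D ≤ 4*(1+γ)*ℓ*S := by nlinarith [mul_pos hu hD]
    have hlb : -(4*(1+γ)*ℓ*S) ≤ 4*(1+γ)*ℓ*B' - u*D := by nlinarith [hup]
    have habs : (4*(1+γ)*ℓ*B' - u*D) ^ 2 ≤ (4*(1+γ)*ℓ*S) ^ 2 := by nlinarith
    calc (γ * (4*(1+γ)*ℓ*B' - u*D)) ^ 2 = γ^2 * (4*(1+γ)*ℓ*B' - u*D) ^ 2 := by ring
      _ ≤ γ^2 * (4*(1+γ)*ℓ*S) ^ 2 := by nlinarith [sq_nonneg γ, sq_nonneg (γ*(4*(1+γ)*ℓ*S))]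
      _ = 4 * (4*(1+γ)*ℓ*γ^2*C') * (2*(1+γ)*ℓ*A') := by
          rw [show (4*(1+γ)*ℓ*S)^2 = 16*(1+γ)^2*ℓ^2*S^2 by ring, hS2]; ring
  have hcpos : 0 < 4*(1+γ)*ℓ*γ^2*C' := by positivity
  have hgoal : l * u * γ * D ≤ 2 * (1 + γ) * ℓ * (A' + 2*γ*l*B' + 2*γ^2*l^2*C') := by
    nlinarith [sq_nonneg (2*(4*(1+γ)*ℓ*γ^2*C')*l + γ * (4*(1+γ)*ℓ*B' - u*D)), hdisc,
      mul_pos hcpos hl, mul_pos (mul_pos hcpos hl) hl]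
  linarith [hgoal]

private lemma statement8_integral (a b γ l : ℝ) (ha : 0 < a) (hab : a < b) (hγ : 0 < γ) :
    ∫ r in a..b, (r ^ (γ - 1/2) * Real.log r + l * r ^ (γ - 1/2)) ^ 2
      = b ^ (2*γ) * ((Real.log b + l)^2/(2*γ) - (Real.log b + l)/(2*γ^2) + 1/(4*γ^3))
      - a ^ (2*γ) * ((Real.log a + l)^2/(2*γ) - (Real.log a + l)/(2*γ^2) + 1/(4*γ^3)) := by
  have hpos : ∀ r ∈ Set.uIcc a b, 0 < r := by
    intro r hr
    rw [Set.uIcc_of_le hab.le] at hr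
    exact lt_of_lt_of_le ha hr.1
  have hcong : ∀ r ∈ Set.uIcc a b,
      (r ^ (γ - 1/2) * Real.log r + l * r ^ (γ - 1/2)) ^ 2
        = r ^ (2*γ - 1) * (Real.log r + l) ^ 2 := by
    intro r hr
    have hr0 := hpos r hr
    have hsq : (r ^ (γ - 1/2 : ℝ)) ^ 2 = r ^ (2*γ - 1) := by
      rw [sq, ← Real.rpow_add hr0]
      congr 1; ring
    calc (r ^ (γ - 1/2) * Real.log r + l * r ^ (γ - 1/2)) ^ 2
        = (r ^ (γ - 1/2 : ℝ)) ^ 2 * (Real.log r + l) ^ 2 := by ring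
      _ = r ^ (2*γ - 1) * (Real.log r + l) ^ 2 := by rw [hsq]
  rw [intervalIntegral.integral_congr hcong]
  have hderiv : ∀ r ∈ Set.uIcc a b,
      HasDerivAt (fun r : ℝ => r ^ (2*γ) * ((Real.log r + l)^2/(2*γ) - (Real.log r + l)/(2*γ^2) + 1/(4*γ^3)))
        (r ^ (2*γ - 1) * (Real.log r + l) ^ 2) r := by
    intro r hr
    have hr0 := hpos r hr
    have h1 : HasDerivAt (fun x : ℝ => x ^ (2*γ)) (2*γ * r ^ (2*γ - 1)) r :=
      Real.hasDerivAt_rpow_const (Or.inl hr0.ne')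
    have h3 : HasDerivAt (fun x : ℝ => Real.log x + l) r⁻¹ r :=
      (Real.hasDerivAt_log hr0.ne').add_const l
    have hG : HasDerivAt (fun x : ℝ => ((Real.log x + l)^2/(2*γ) - (Real.log x + l)/(2*γ^2) + 1/(4*γ^3)))
        ((2 * (Real.log r + l) ^ 1 * r⁻¹)/(2*γ) - r⁻¹/(2*γ^2)) r :=
      (((h3.pow 2).div_const _).sub (h3.div_const _)).add_const _
    have := h1.mul hG
    convert this using 1
    all_goals try rfl
    have hrw : r ^ (2*γ) = r ^ (2*γ - 1) * r := by
      rw [← Real.rpow_add_one hr0.ne']; congr 1; ring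
    rw [hrw]
    field_simp
    ring
  have hint : IntervalIntegrable (fun r : ℝ => r ^ (2*γ - 1) * (Real.log r + l) ^ 2) volume a b := by
    apply ContinuousOn.intervalIntegrable
    intro r hr
    have hr0 := hpos r hr
    exact ((Real.continuousAt_rpow_const r _ (Or.inl hr0.ne')).mul
      (((Real.continuousAt_log hr0.ne').add continuousAt_const).pow 2)).continuousWithinAt
  exact intervalIntegral.integral_eq_sub_of_hasDerivAt hderiv hint

/-- With `f₁(r) = r^{γ−1/2} log r` and `f₂(r) = r^{γ−1/2}` and
`D = (1 − (a/b)^{2γ})² − 4γ²(a/b)^{2γ} log²(b/a)`, one has `D > 0` and, for every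
`λ > 0`, `λ b^{2γ}/log(1/b) ≤ (8γ²(1+γ)/D) ∫_a^b (f₁ + λ f₂)²`. -/
theorem statement8 (a b γ : ℝ) (ha : 0 < a) (hab : a < b) (hb : b ≤ Real.exp (-1))
    (hγ : 0 < γ) :
    0 < (1 - (a / b) ^ (2 * γ)) ^ 2 -
        4 * γ ^ 2 * (a / b) ^ (2 * γ) * Real.log (b / a) ^ 2 ∧
      ∀ l : ℝ, 0 < l →
        l * b ^ (2 * γ) / Real.log (1 / b) ≤
          8 * γ ^ 2 * (1 + γ) /
              ((1 - (a / b) ^ (2 * γ)) ^ 2 -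
                4 * γ ^ 2 * (a / b) ^ (2 * γ) * Real.log (b / a) ^ 2) *
            ∫ r in a..b, (r ^ (γ - 1 / 2) * Real.log r + l * r ^ (γ - 1 / 2)) ^ 2 := by
  have hb0 : 0 < b := ha.trans hab
  set D := (1 - (a / b) ^ (2 * γ)) ^ 2 -
      4 * γ ^ 2 * (a / b) ^ (2 * γ) * Real.log (b / a) ^ 2 with hDdef
  have hD : 0 < D := by
    have ht : 0 < Real.log (b / a) := Real.log_pos (by rw [lt_div_iff₀ ha]; linarith)
    set t := Real.log (b / a) with htdef
    set s := 2 * γ * t with hsdef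
    have hs : 0 < s := by positivity
    have hx : (a / b) ^ (2 * γ) = Real.exp (-s) := by
      rw [Real.rpow_def_of_pos (div_pos ha hb0)]
      congr 1
      rw [show a / b = (b / a)⁻¹ by field_simp, Real.log_inv]
      ring
    rw [hDdef, hx]
    have hkey : s / 2 < Real.sinh (s / 2) := Real.self_lt_sinh_iff.mpr (by linarith)
    rw [Real.sinh_eq] at hkey
    have he : Real.exp (-s) = Real.exp (-(s/2)) ^ 2 := by
      rw [sq, ← Real.exp_add]; ring_nf
    have he2 : Real.exp (s / 2) * Real.exp (-(s/2)) = 1 := by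
      rw [← Real.exp_add]; norm_num
    have hep : 0 < Real.exp (-(s/2)) := Real.exp_pos _
    have hkey2 : s * Real.exp (-(s/2)) < 1 - Real.exp (-s) := by
      rw [he]
      nlinarith [Real.exp_pos (s/2)]
    have h1 : 0 ≤ s * Real.exp (-(s/2)) := by positivity
    have h4 : 4 * γ ^ 2 * Real.exp (-s) * t ^ 2 = s ^ 2 * Real.exp (-s) := by
      rw [hsdef]; ring
    rw [h4, he]
    nlinarith [hkey2, h1]
  refine ⟨hD, ?_⟩
  intro l hl
  set u := b ^ (2 * γ) with hudef
  set v := a ^ (2 * γ) with hvdef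
  set L := Real.log b with hLdef
  set M := Real.log a with hMdef
  have hu : 0 < u := Real.rpow_pos_of_pos hb0 _
  have hv : 0 < v := Real.rpow_pos_of_pos ha _
  have huv : v < u := Real.rpow_lt_rpow ha.le hab (by positivity)
  have hL : L ≤ -1 := by
    have := Real.log_le_log hb0 hb
    rwa [Real.log_exp] at this
  have hM : M < L := Real.log_lt_log ha hab
  have hDu : u ^ 2 * D = (u - v) ^ 2 - 4 * γ ^ 2 * u * v * (L - M) ^ 2 := by
    rw [hDdef, Real.div_rpow ha.le hb0.le, Real.log_div hb0.ne' ha.ne', ← hudef, ← hvdef,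
      ← hLdef, ← hMdef]
    field_simp
  have key := statement8_quad u v L M γ D l hv huv hM hL hγ hD hDu hl
  rw [statement8_integral a b γ l ha hab hγ, ← hudef, ← hvdef, ← hLdef, ← hMdef]
  have hlog : Real.log (1 / b) = -L := by rw [one_div, Real.log_inv, hLdef]
  rw [hlog]
  clear_value D u v L M
  clear hDdef hudef hvdef hLdef hMdef hlog hDu
  have hLpos : 0 < -L := by linarith
  have hγD : 0 < γ * D := mul_pos hγ hD
  rw [div_le_iff₀ hLpos]
  have h2 : 8 * γ ^ 2 * (1 + γ) / D *
      (u * ((L + l)^2/(2*γ) - (L + l)/(2*γ^2) + 1/(4*γ^3))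
        - v * ((M + l)^2/(2*γ) - (M + l)/(2*γ^2) + 1/(4*γ^3))) * -L
      = 2 * (1 + γ) * (-L) *
      ((u * (2*γ^2*L^2 - 2*γ*L + 1) - v * (2*γ^2*M^2 - 2*γ*M + 1))
       + 2*γ*l*(u * (2*γ*L - 1) - v * (2*γ*M - 1)) + 2*γ^2*l^2*(u - v)) / (γ * D) := by
    field_simp
    ring
  rw [h2, le_div_iff₀ hγD]
  nlinarith [key]
end

section
/- Let Ω ⊆ ℝ² be a nonempty open connected set and let v : Ω → ℝ be twice continuously differentiable with ∂₁∂₂v = 0 and ∂₁²v = ∂₂²v at every point of Ω (equivalently, identifying ℝ² with ℂ, the real-valued function v satisfies ∂_z²v = 0 on Ω). Then there exist real constants c₀, c₁, c₂, c₃ such that v(x₁, x₂) = c₀ + c₁·x₁ + c₂·x₂ + c₃·(x₁² + x₂²) for all (x₁, x₂) ∈ Ω; that is, the real kernel of ∂_z² is spanned by 1, Re z, Im z, and |z|². -/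
open MeasureTheory

noncomputable section

/-- A real-linear map on `ℂ` is determined by its values at `1` and `I`. -/
lemma clm_eval {E : Type*} [NormedAddCommGroup E] [NormedSpace ℝ E]
    (M : ℂ →L[ℝ] E) (u : ℂ) : M u = u.re • M 1 + u.im • M Complex.I := by
  have hu : u = u.re • (1 : ℂ) + u.im • Complex.I := by
    simp [Complex.real_smul, Complex.re_add_im]
  conv_lhs => rw [hu]
  simp only [map_add, _root_.map_smul]

/-- Zero derivative on an open preconnected set implies constant. -/
lemma const_of_fderiv_zero {E : Type*} [NormedAddCommGroup E] [NormedSpace ℝ E]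
    {f : ℂ → E} {Ω : Set ℂ} (hΩ : IsOpen Ω) (hconn : IsPreconnected Ω)
    (hf : ∀ z ∈ Ω, DifferentiableAt ℝ f z)
    (h' : ∀ z ∈ Ω, fderiv ℝ f z = 0) {x y : ℂ} (hx : x ∈ Ω) (hy : y ∈ Ω) : f x = f y := by
  set S : Set ℂ := {z ∈ Ω | f z = f y} with hS
  set T : Set ℂ := {z ∈ Ω | f z ≠ f y} with hT
  have hSopen : IsOpen S := by
    rw [isOpen_iff_forall_mem_open]
    rintro z ⟨hzΩ, hzf⟩
    obtain ⟨ε, hε, hball⟩ := Metric.isOpen_iff.1 hΩ z hzΩ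
    refine ⟨Metric.ball z ε, ?_, Metric.isOpen_ball, Metric.mem_ball_self hε⟩
    intro w hw
    refine ⟨hball hw, ?_⟩
    have : f w = f z := by
      refine (convex_ball z ε).is_const_of_fderivWithin_eq_zero
        (fun u hu => (hf u (hball hu)).differentiableWithinAt) ?_ hw (Metric.mem_ball_self hε)
      intro u hu
      rw [fderivWithin_of_isOpen Metric.isOpen_ball hu]
      exact h' u (hball hu)
    rw [this, hzf]
  have hTopen : IsOpen T := by
    rw [isOpen_iff_forall_mem_open]
    rintro z ⟨hzΩ, hzf⟩
    have hc : ContinuousAt f z := (hf z hzΩ).continuousAt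
    have : {w | f w ≠ f y} ∈ nhds z := hc.preimage_mem_nhds (isOpen_ne.mem_nhds hzf)
    obtain ⟨U, hU, hUo, hzU⟩ := mem_nhds_iff.1 (Filter.inter_mem (hΩ.mem_nhds hzΩ) this)
    exact ⟨U, fun w hw => ⟨(hU hw).1, (hU hw).2⟩, hUo, hzU⟩
  by_contra hne
  have hsub : Ω ⊆ S ∪ T := fun z hz => by
    by_cases h : f z = f y
    · exact Or.inl ⟨hz, h⟩
    · exact Or.inr ⟨hz, h⟩
  have h1 : (Ω ∩ S).Nonempty := ⟨y, hy, hy, rfl⟩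
  have h2 : (Ω ∩ T).Nonempty := ⟨x, hx, hx, hne⟩
  obtain ⟨z, _, ⟨_, hz1⟩, ⟨_, hz2⟩⟩ := hconn S T hSopen hTopen hsub h1 h2
  exact hz2 hz1

/-- The complex gradient `∂₁v + i ∂₂v` is holomorphic with real derivative `∂₁∂₁v`. -/
lemma key_hasDerivAt {Ω : Set ℂ} (hΩ : IsOpen Ω) {v : ℂ → ℝ}
    (hv : ContDiffOn ℝ 2 v Ω)
    (h1 : ∀ z ∈ Ω, pd1 (pd2 v) z = 0)
    (h2 : ∀ z ∈ Ω, pd1 (pd1 v) z = pd2 (pd2 v) z)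
    {z : ℂ} (hz : z ∈ Ω) :
    HasDerivAt (fun y => ((pd1 v y : ℂ) + Complex.I * (pd2 v y : ℂ)))
      ((pd1 (pd1 v) z : ℂ)) z := by
  have hv2 : ContDiffAt ℝ 2 v z := hv.contDiffAt (hΩ.mem_nhds hz)
  have hD : ContDiffAt ℝ 1 (fderiv ℝ v) z := hv2.fderiv_right (by norm_num)
  have hDdiff : DifferentiableAt ℝ (fderiv ℝ v) z := hD.differentiableAt one_ne_zero
  set D2 := fderiv ℝ (fderiv ℝ v) z with hD2
  have hL1 : HasFDerivAt (pd1 v)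
      ((ContinuousLinearMap.apply ℝ ℝ (1 : ℂ)).comp D2) z :=
    (ContinuousLinearMap.apply ℝ ℝ (1 : ℂ)).hasFDerivAt.comp z hDdiff.hasFDerivAt
  have hL2 : HasFDerivAt (pd2 v)
      ((ContinuousLinearMap.apply ℝ ℝ (Complex.I)).comp D2) z :=
    (ContinuousLinearMap.apply ℝ ℝ (Complex.I)).hasFDerivAt.comp z hDdiff.hasFDerivAt
  have hsym : ∀ a b : ℂ, D2 a b = D2 b a := hv2.isSymmSndFDerivAt (by simp)
  have e11 : D2 1 1 = pd1 (pd1 v) z := by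
    have := hL1.fderiv
    simp only [pd1, this]
    rfl
  have e1I : D2 1 Complex.I = 0 := by
    have := hL2.fderiv
    have h := h1 z hz
    simp only [pd1, pd2, this] at h ⊢
    exact h
  have eI1 : D2 Complex.I 1 = 0 := by rw [hsym]; exact e1I
  have eII : D2 Complex.I Complex.I = pd1 (pd1 v) z := by
    have := hL2.fderiv
    have h := (h2 z hz).symm
    simp only [pd1, pd2, this] at h
    rw [← e11]
    have h11 := hL1.fderiv
    simp only [pd1, h11] at h ⊢
    exact h
  have hF : HasFDerivAt (fun y => ((pd1 v y : ℂ) + Complex.I * (pd2 v y : ℂ)))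
      (Complex.ofRealCLM.comp ((ContinuousLinearMap.apply ℝ ℝ (1 : ℂ)).comp D2)
        + Complex.I • (Complex.ofRealCLM.comp
            ((ContinuousLinearMap.apply ℝ ℝ (Complex.I)).comp D2))) z := by
    exact (Complex.ofRealCLM.hasFDerivAt.comp z hL1).add
      ((Complex.ofRealCLM.hasFDerivAt.comp z hL2).const_smul Complex.I)
  set a : ℝ := pd1 (pd1 v) z with ha
  have hrs : (ContinuousLinearMap.smulRight (1 : ℂ →L[ℂ] ℂ) (a : ℂ)).restrictScalars ℝ
      = Complex.ofRealCLM.comp ((ContinuousLinearMap.apply ℝ ℝ (1 : ℂ)).comp D2)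
        + Complex.I • (Complex.ofRealCLM.comp
            ((ContinuousLinearMap.apply ℝ ℝ (Complex.I)).comp D2)) := by
    apply ContinuousLinearMap.ext
    intro u
    have hu : u = u.re • (1 : ℂ) + u.im • Complex.I := by
      simp [Complex.real_smul, Complex.re_add_im]
    simp only [ContinuousLinearMap.coe_restrictScalars', ContinuousLinearMap.smulRight_apply,
      ContinuousLinearMap.one_apply, ContinuousLinearMap.add_apply,
      ContinuousLinearMap.coe_comp', Function.comp_apply, ContinuousLinearMap.smul_apply,
      ContinuousLinearMap.apply_apply, Complex.ofRealCLM_apply]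
    have d1 : D2 u 1 = u.re * a := by
      nth_rewrite 1 [hu]
      simp only [map_add, _root_.map_smul, ContinuousLinearMap.add_apply,
        ContinuousLinearMap.smul_apply, e11, eI1, smul_eq_mul]
      ring
    have dI : D2 u Complex.I = u.im * a := by
      nth_rewrite 1 [hu]
      simp only [map_add, _root_.map_smul, ContinuousLinearMap.add_apply,
        ContinuousLinearMap.smul_apply, e1I, eII, smul_eq_mul]
      ring
    rw [d1, dI, smul_eq_mul, smul_eq_mul]
    push_cast
    nth_rewrite 1 [← Complex.re_add_im u]
    ring
  have := hasFDerivAt_of_restrictScalars ℝ hF hrs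
  simpa using this.hasDerivAt

/-- The real kernel of `∂_z²` on a nonempty open connected set:
if `∂₁∂₂v = 0` and `∂₁²v = ∂₂²v` on `Ω`, then `v` is an affine combination of
`1`, `Re z`, `Im z` and `|z|²` on `Ω`. -/
theorem statement11 (Ω : Set ℂ) (hΩ : IsOpen Ω) (hne : Ω.Nonempty)
    (hconn : IsConnected Ω) (v : ℂ → ℝ) (hv : ContDiffOn ℝ 2 v Ω)
    (h1 : ∀ z ∈ Ω, pd1 (pd2 v) z = 0)
    (h2 : ∀ z ∈ Ω, pd1 (pd1 v) z = pd2 (pd2 v) z) :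
    ∃ c₀ c₁ c₂ c₃ : ℝ, ∀ z ∈ Ω,
      v z = c₀ + c₁ * z.re + c₂ * z.im + c₃ * (z.re ^ 2 + z.im ^ 2) := by
  obtain ⟨z₀, hz₀⟩ := hne
  set F : ℂ → ℂ := fun y => ((pd1 v y : ℂ) + Complex.I * (pd2 v y : ℂ)) with hFdef
  have hkey : ∀ z ∈ Ω, HasDerivAt F ((pd1 (pd1 v) z : ℂ)) z :=
    fun z hz => key_hasDerivAt hΩ hv h1 h2 hz
  have hFdiff : DifferentiableOn ℂ F Ω :=
    fun z hz => ((hkey z hz).differentiableAt).differentiableWithinAt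
  have hFan : AnalyticOnNhd ℂ F Ω := hFdiff.analyticOnNhd hΩ
  set H : ℂ → ℂ := deriv F with hHdef
  have hHan : AnalyticOnNhd ℂ H Ω := hFan.deriv
  have hHval : ∀ z ∈ Ω, H z = (pd1 (pd1 v) z : ℂ) := fun z hz => (hkey z hz).deriv
  have hHim : ∀ z ∈ Ω, (H z).im = 0 := by
    intro z hz
    rw [hHval z hz]
    simp
  -- `H` has vanishing real derivative on `Ω`
  have hHdiff : ∀ z ∈ Ω, DifferentiableAt ℝ H z :=
    fun z hz => ((hHan z hz).differentiableAt).restrictScalars ℝ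
  have hH0 : ∀ z ∈ Ω, fderiv ℝ H z = 0 := by
    intro z hz
    have hHd : DifferentiableAt ℂ H z := (hHan z hz).differentiableAt
    set d : ℂ := deriv H z with hd
    have hfr : fderiv ℝ H z
        = (ContinuousLinearMap.smulRight (1 : ℂ →L[ℂ] ℂ) d).restrictScalars ℝ := by
      rw [hHd.fderiv_restrictScalars ℝ]
      congr 1
      exact hHd.hasDerivAt.hasFDerivAt.fderiv
    have him : fderiv ℝ (fun y => (H y).im) z = Complex.imCLM.comp (fderiv ℝ H z) :=
      (Complex.imCLM.hasFDerivAt.comp z (hHdiff z hz).hasFDerivAt).fderiv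
    have him0 : fderiv ℝ (fun y => (H y).im) z = 0 := by
      have heq : (fun y => (H y).im) =ᶠ[nhds z] fun _ => (0 : ℝ) := by
        filter_upwards [hΩ.mem_nhds hz] with y hy using hHim y hy
      rw [heq.fderiv_eq]
      exact fderiv_const_apply 0
    have hcomp : Complex.imCLM.comp (fderiv ℝ H z) = 0 := by rw [← him, him0]
    have hvan : ∀ u : ℂ, (fderiv ℝ H z u).im = 0 := by
      intro u
      have := congrArg (fun L : ℂ →L[ℝ] ℝ => L u) hcomp
      simpa using this
    have h1' : d.im = 0 := by
      have := hvan 1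
      rw [hfr] at this
      simpa using this
    have h2' : d.re = 0 := by
      have := hvan Complex.I
      rw [hfr] at this
      simpa [Complex.mul_im] using this
    have hd0 : d = 0 := Complex.ext h2' h1'
    rw [hfr, hd0]
    ext u
    simp
  -- hence `H` is constant on `Ω`
  have hHconst : ∀ z ∈ Ω, H z = H z₀ :=
    fun z hz => const_of_fderiv_zero hΩ hconn.isPreconnected hHdiff hH0 hz hz₀
  set a : ℝ := pd1 (pd1 v) z₀ with hadef
  have hkey' : ∀ z ∈ Ω, HasDerivAt F ((a : ℂ)) z := by
    intro z hz
    have : (pd1 (pd1 v) z : ℂ) = (a : ℂ) := by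
      rw [← hHval z hz, ← hHval z₀ hz₀, hHconst z hz]
    rw [← this]
    exact hkey z hz
  -- `G = F - a z` has zero derivative, hence is constant
  set G : ℂ → ℂ := fun y => F y - (a : ℂ) * y with hGdef
  have hG : ∀ z ∈ Ω, HasDerivAt G 0 z := by
    intro z hz
    have := (hkey' z hz).sub ((hasDerivAt_id z).const_mul (a : ℂ))
    rw [show (0:ℂ) = (a:ℂ) - (a:ℂ) * 1 by ring]
    exact this
  have hGdiff : ∀ z ∈ Ω, DifferentiableAt ℝ G z :=
    fun z hz => ((hG z hz).differentiableAt).restrictScalars ℝ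
  have hG0 : ∀ z ∈ Ω, fderiv ℝ G z = 0 := by
    intro z hz
    rw [((hG z hz).hasFDerivAt.restrictScalars ℝ).fderiv]
    ext u
    simp
  have hGconst : ∀ z ∈ Ω, G z = G z₀ :=
    fun z hz => const_of_fderiv_zero hΩ hconn.isPreconnected hGdiff hG0 hz hz₀
  set b : ℂ := G z₀ with hbdef
  have hFz : ∀ z ∈ Ω, F z = b + (a : ℂ) * z := by
    intro z hz
    have := hGconst z hz
    simp only [hGdef] at this
    linear_combination this
  have hpd1 : ∀ z ∈ Ω, pd1 v z = b.re + a * z.re := by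
    intro z hz
    have := congrArg Complex.re (hFz z hz)
    simpa [hFdef, Complex.mul_re] using this
  have hpd2 : ∀ z ∈ Ω, pd2 v z = b.im + a * z.im := by
    intro z hz
    have := congrArg Complex.im (hFz z hz)
    simpa [hFdef, Complex.mul_im] using this
  -- the candidate quadratic polynomial
  set q : ℂ → ℝ := fun y =>
    b.re * y.re + b.im * y.im + (a / 2) * (y.re * y.re + y.im * y.im) with hqdef
  have hre : ∀ z : ℂ, HasFDerivAt (fun y : ℂ => y.re) Complex.reCLM z :=
    fun z => Complex.reCLM.hasFDerivAt
  have him' : ∀ z : ℂ, HasFDerivAt (fun y : ℂ => y.im) Complex.imCLM z :=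
    fun z => Complex.imCLM.hasFDerivAt
  have hq : ∀ z : ℂ, HasFDerivAt q
      (b.re • Complex.reCLM + b.im • Complex.imCLM
        + (a / 2) • ((z.re • Complex.reCLM + z.re • Complex.reCLM)
          + (z.im • Complex.imCLM + z.im • Complex.imCLM))) z := by
    intro z
    exact (((hre z).const_mul b.re).add ((him' z).const_mul b.im)).add
      ((((hre z).mul (hre z)).add ((him' z).mul (him' z))).const_mul (a / 2))
  -- `v - q` has zero derivative on `Ω`
  have hsub0 : ∀ z ∈ Ω, fderiv ℝ (fun y => v y - q y) z = 0 := by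
    intro z hz
    have hvd : DifferentiableAt ℝ v z :=
      (hv.contDiffAt (hΩ.mem_nhds hz)).differentiableAt two_ne_zero
    rw [show (fun y => v y - q y) = v - q from rfl, (hvd.hasFDerivAt.sub (hq z)).fderiv]
    ext u
    have hDu : fderiv ℝ v z u = u.re * pd1 v z + u.im * pd2 v z := by
      rw [clm_eval (fderiv ℝ v z) u]
      simp [pd1, pd2, smul_eq_mul]
    simp only [ContinuousLinearMap.sub_apply, ContinuousLinearMap.add_apply,
      ContinuousLinearMap.smul_apply, Complex.reCLM_apply, Complex.imCLM_apply,
      ContinuousLinearMap.zero_apply, smul_eq_mul]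
    rw [hDu, hpd1 z hz, hpd2 z hz]
    ring
  have hsubdiff : ∀ z ∈ Ω, DifferentiableAt ℝ (fun y => v y - q y) z := by
    intro z hz
    have hvd : DifferentiableAt ℝ v z :=
      (hv.contDiffAt (hΩ.mem_nhds hz)).differentiableAt two_ne_zero
    exact hvd.sub (hq z).differentiableAt
  have hvq : ∀ z ∈ Ω, v z - q z = v z₀ - q z₀ :=
    fun z hz => const_of_fderiv_zero hΩ hconn.isPreconnected hsubdiff hsub0 hz hz₀
  refine ⟨v z₀ - q z₀, b.re, b.im, a / 2, fun z hz => ?_⟩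
  have h := hvq z hz
  have : v z = (v z₀ - q z₀) + q z := by linarith
  rw [this]
  simp only [hqdef]
  ring
end
end

section
/- There exists an explicit universal constant, namely (8/log 2)·√(3/π), with the following property. Let 0 < a < b, let Ω = {x ∈ ℝ² : a < |x| < b}, and let u : ℝ² → ℝ be twice continuously differentiable on Ω with Δu = 0 on Ω. Then for every x ∈ ℝ² with 2a < |x| < b/2, |∇u(x)| ≤ (8/log 2)·√(3/π)·(1/|x|)·‖∇u‖_{L^{2,∞}(Ω)}, where ‖F‖_{L^{2,∞}(Ω)} = sup_{t>0} t·(vol{y ∈ Ω : |F(y)| > t})^{1/2} is the weak-L² quasinorm with respect to Lebesgue measure on Ω. -/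
open MeasureTheory

noncomputable section

/-- The weak-`L²` quasinorm `sup_{t>0} t · vol{y ∈ Ω : F(y) > t}^{1/2}` (valued in
`ℝ≥0∞`) of a nonnegative function `F` on a set `Ω ⊆ ℝ² ≅ ℂ`. -/
def weakL2 (F : ℂ → ℝ) (Ω : Set ℂ) : ENNReal :=
  ⨆ (t : ℝ) (_ : 0 < t),
    ENNReal.ofReal t * (volume {y : ℂ | y ∈ Ω ∧ t < F y}) ^ (1 / 2 : ℝ)

open Metric Set
open scoped Real

def gradC (u : ℂ → ℝ) (z : ℂ) : ℂ := (pd1 u z : ℂ) - (pd2 u z : ℂ) * Complex.I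

lemma abs_gradC (u : ℂ → ℝ) (z : ℂ) :
    ‖gradC u z‖ = Real.sqrt (pd1 u z ^ 2 + pd2 u z ^ 2) := by
  rw [Complex.norm_def, Complex.normSq_apply]
  congr 1
  simp [gradC]
  ring

lemma ann_open (a b : ℝ) : IsOpen (ann a b) := by
  have : ann a b = (fun z : ℂ => ‖z‖) ⁻¹' (Ioi a) ∩ (fun z : ℂ => ‖z‖) ⁻¹' (Iio b) := rfl
  rw [this]
  exact (isOpen_Ioi.preimage continuous_norm).inter
    (isOpen_Iio.preimage continuous_norm)

lemma gradC_diffOn (a b : ℝ) (u : ℂ → ℝ) (hu : ContDiffOn ℝ 2 u (ann a b))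
    (hharm : ∀ z ∈ ann a b, lap u z = 0) :
    DifferentiableOn ℂ (gradC u) (ann a b) := by
  have hop := ann_open a b
  intro z hz
  have hmem : ann a b ∈ nhds z := hop.mem_nhds hz
  have hφ : ContDiffOn ℝ 1 (fderiv ℝ u) (ann a b) :=
    hu.fderiv_of_isOpen hop (by norm_num)
  have hφd : DifferentiableAt ℝ (fderiv ℝ u) z :=
    ((hφ.differentiableOn (by norm_num)) z hz).differentiableAt hmem
  set Φ := fderiv ℝ (fderiv ℝ u) z with hΦdef
  have hev : ∀ᶠ y in nhds z, HasFDerivAt u (fderiv ℝ u y) y := by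
    filter_upwards [hmem] with y hy
    exact ((hu.differentiableOn (by norm_num) y hy).differentiableAt
      (hop.mem_nhds hy)).hasFDerivAt
  have hsym := second_derivative_symmetric_of_eventually hev hφd.hasFDerivAt
  have h1 : HasFDerivAt (pd1 u) ((ContinuousLinearMap.apply ℝ ℝ (1:ℂ)).comp Φ) z :=
    (ContinuousLinearMap.apply ℝ ℝ (1:ℂ)).hasFDerivAt.comp z hφd.hasFDerivAt
  have h2 : HasFDerivAt (pd2 u) ((ContinuousLinearMap.apply ℝ ℝ (Complex.I)).comp Φ) z :=
    (ContinuousLinearMap.apply ℝ ℝ (Complex.I)).hasFDerivAt.comp z hφd.hasFDerivAt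
  have hC : Φ 1 1 + Φ Complex.I Complex.I = 0 := by
    have h0 : lap u z = 0 := hharm z hz
    rw [lap] at h0
    have e1 : pd1 (pd1 u) z = Φ 1 1 := by
      rw [pd1, h1.fderiv]; simp
    have e2 : pd2 (pd2 u) z = Φ Complex.I Complex.I := by
      rw [pd2, h2.fderiv]; simp
    rwa [e1, e2] at h0
  have hA : HasFDerivAt (fun y => ((pd1 u y : ℝ) : ℂ))
      (Complex.ofRealCLM.comp ((ContinuousLinearMap.apply ℝ ℝ (1:ℂ)).comp Φ)) z :=
    Complex.ofRealCLM.hasFDerivAt.comp z h1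
  have hB : HasFDerivAt (fun y => ((pd2 u y : ℝ) : ℂ))
      (Complex.ofRealCLM.comp ((ContinuousLinearMap.apply ℝ ℝ (Complex.I)).comp Φ)) z :=
    Complex.ofRealCLM.hasFDerivAt.comp z h2
  have hD : HasFDerivAt (gradC u)
      ((Complex.ofRealCLM.comp ((ContinuousLinearMap.apply ℝ ℝ (1:ℂ)).comp Φ)) -
        Complex.I • (Complex.ofRealCLM.comp
          ((ContinuousLinearMap.apply ℝ ℝ (Complex.I)).comp Φ))) z := by
    exact hA.sub (hB.mul_const Complex.I)
  set D := ((Complex.ofRealCLM.comp ((ContinuousLinearMap.apply ℝ ℝ (1:ℂ)).comp Φ)) -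
      Complex.I • (Complex.ofRealCLM.comp
        ((ContinuousLinearMap.apply ℝ ℝ (Complex.I)).comp Φ))) with hDdef
  have hDval : ∀ w : ℂ, D w = (Φ w 1 : ℂ) - (Φ w Complex.I : ℂ) * Complex.I := by
    intro w
    simp [hDdef, ContinuousLinearMap.smul_apply, smul_eq_mul]
    ring
  have hlin : ∀ w : ℂ, D w = w * D 1 := by
    intro w
    have hw : w = (w.re : ℂ) + (w.im : ℂ) * Complex.I := (Complex.re_add_im w).symm
    have : D w = D ((w.re : ℝ) • (1:ℂ) + (w.im : ℝ) • Complex.I) := by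
      congr 1
      rw [hw]; simp [Complex.real_smul]
    rw [this, D.map_add, D.map_smul, D.map_smul]
    have hDI : D Complex.I = Complex.I * D 1 := by
      rw [hDval, hDval]
      have hΦII : Φ Complex.I Complex.I = -(Φ 1 1) := by linarith [hC]
      rw [hsym Complex.I 1, hΦII]
      push_cast
      linear_combination (((Φ 1) Complex.I : ℝ) : ℂ) * Complex.I_sq
    rw [hDI]
    simp [Complex.real_smul]
    linear_combination D 1 * Complex.re_add_im w
  have hdiff : DifferentiableAt ℂ (gradC u) z := by
    rw [differentiableAt_iff_restrictScalars ℝ hD.differentiableAt]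
    refine ⟨(D 1) • (1 : ℂ →L[ℂ] ℂ), ?_⟩
    rw [hD.fderiv]
    ext w
    simp [ContinuousLinearMap.smul_apply, smul_eq_mul]
    rw [hlin w]; ring
  exact hdiff.differentiableWithinAt


lemma circle_bound {f : ℂ → ℂ} {s : Set ℂ} (hf : DifferentiableOn ℂ f s)
    {c : ℂ} {r ρ : ℝ} (hρ : 0 < ρ) (hρr : ρ ≤ r) (hsub : closedBall c r ⊆ s) :
    2 * π * ‖f c‖ ≤ ∫ θ in (0:ℝ)..(2*π), ‖f (circleMap c ρ θ)‖ := by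
  have hsub' : closedBall c ρ ⊆ s := (closedBall_subset_closedBall hρr).trans hsub
  have hd : DiffContOnCl ℂ f (ball c ρ) := by
    apply DifferentiableOn.diffContOnCl
    rw [closure_ball c hρ.ne']
    exact hf.mono hsub'
  have key := hd.circleIntegral_sub_inv_smul (mem_ball_self hρ)
  have h2 : (∮ z in C(c, ρ), (z - c)⁻¹ • f z)
      = ∫ θ in (0:ℝ)..(2*π), Complex.I • f (circleMap c ρ θ) := by
    rw [circleIntegral]
    apply intervalIntegral.integral_congr
    intro θ _
    simp only [deriv_circleMap, circleMap_sub_center, smul_eq_mul]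
    have h0 : circleMap 0 ρ θ ≠ 0 := by
      simp [circleMap, Complex.exp_ne_zero, hρ.ne']
    field_simp
  calc 2 * π * ‖f c‖
      = ‖∫ θ in (0:ℝ)..(2*π), Complex.I • f (circleMap c ρ θ)‖ := by
        rw [← h2, key]
        simp only [smul_eq_mul, norm_mul, Complex.norm_I,
          Complex.norm_real, Real.norm_eq_abs, Complex.norm_two]
        rw [abs_of_pos Real.pi_pos]
        ring
    _ ≤ ∫ θ in (0:ℝ)..(2*π), ‖Complex.I • f (circleMap c ρ θ)‖ :=
        intervalIntegral.norm_integral_le_integral_norm (by positivity)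
    _ = ∫ θ in (0:ℝ)..(2*π), ‖f (circleMap c ρ θ)‖ := by
        apply intervalIntegral.integral_congr
        intro θ _
        simp

lemma meanvalue {f : ℂ → ℂ} {s : Set ℂ} (hf : DifferentiableOn ℂ f s)
    (hm : Measurable f) {c : ℂ} {r : ℝ} (hr : 0 < r) (hsub : closedBall c r ⊆ s) :
    π * r ^ 2 * ‖f c‖ ≤ ∫ y in closedBall c r, ‖f y‖ := by
  set g : ℂ → ℝ := (closedBall c r).indicator (fun y => ‖f y‖) with hgdef
  have hgm : Measurable g :=
    hm.norm.indicator measurableSet_closedBall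
  have hcont : ContinuousOn (fun y => ‖f y‖) (closedBall c r) :=
    (hf.mono hsub).continuousOn.norm
  obtain ⟨M, hM⟩ := (isCompact_closedBall c r).exists_bound_of_continuousOn hcont
  have hM0 : 0 ≤ M := le_trans (norm_nonneg _) (hM c (mem_closedBall_self hr.le))
  have hg_nonneg : ∀ y, 0 ≤ g y := by
    intro y
    rw [hgdef]
    exact Set.indicator_nonneg (fun y _ => norm_nonneg _) y
  have hg_le : ∀ y, g y ≤ M := by
    intro y
    rw [hgdef]
    by_cases hy : y ∈ closedBall c r
    · rw [Set.indicator_of_mem hy]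
      exact le_trans (le_abs_self _) (hM y hy)
    · rw [Set.indicator_of_notMem hy]; exact hM0
  have hsymm_cont : Continuous fun p : ℝ × ℝ => (Complex.polarCoord.symm p : ℂ) := by
    simp only [Complex.polarCoord_symm_apply]
    fun_prop
  have habs_symm : ∀ p : ℝ × ℝ, ‖Complex.polarCoord.symm p‖ = |p.1| := by
    intro p
    rw [Complex.polarCoord_symm_apply, norm_mul, Complex.norm_real, Real.norm_eq_abs,
      Complex.ofReal_cos, Complex.ofReal_sin, Complex.norm_cos_add_sin_mul_I, mul_one]
  set H : ℝ × ℝ → ℝ := fun p => p.1 • g (c + Complex.polarCoord.symm p) with hHdef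
  set T2 : Set (ℝ × ℝ) := Ioc (0:ℝ) r ×ˢ Ioo (-π) π with hT2def
  have hHm : Measurable H :=
    measurable_fst.smul (hgm.comp (measurable_const.add hsymm_cont.measurable))
  have hT2m : MeasurableSet T2 := measurableSet_Ioc.prod measurableSet_Ioo
  have hT2vol : volume T2 ≠ ⊤ := by
    rw [hT2def, Measure.volume_eq_prod, Measure.prod_prod]
    exact ENNReal.mul_ne_top (by simp [Real.volume_Ioc]) (by simp [Real.volume_Ioo])
  have hHi : IntegrableOn H T2 := by
    apply Measure.integrableOn_of_bounded hT2vol hHm.aestronglyMeasurable (M := r * M)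
    rw [ae_restrict_iff' hT2m]
    filter_upwards with p hp
    simp only [hHdef]
    simp only [smul_eq_mul, Real.norm_eq_abs]
    rw [abs_mul]
    apply mul_le_mul
    · rw [abs_of_pos hp.1.1]; exact hp.1.2
    · rw [abs_of_nonneg (hg_nonneg _)]; exact hg_le _
    · exact abs_nonneg _
    · exact hr.le
  -- the area integral equals the polar iterated integral
  have step1 : ∫ y in closedBall c r, ‖f y‖ = ∫ y : ℂ, g y := by
    rw [hgdef, integral_indicator measurableSet_closedBall]
  have step2 : ∫ y : ℂ, g y = ∫ y : ℂ, g (c + y) := (integral_add_left_eq_self g c).symm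
  have step3 : ∫ y : ℂ, g (c + y)
      = ∫ p in polarCoord.target, p.1 • g (c + Complex.polarCoord.symm p) :=
    (Complex.integral_comp_polarCoord_symm (fun y => g (c + y))).symm
  have htarget : polarCoord.target = Ioi (0:ℝ) ×ˢ Ioo (-π) π := rfl
  have step4 : ∫ p in polarCoord.target, p.1 • g (c + Complex.polarCoord.symm p)
      = ∫ p in T2, H p := by
    rw [htarget]
    apply setIntegral_eq_of_subset_of_forall_diff_eq_zero
      (measurableSet_Ioi.prod measurableSet_Ioo)
    · rw [hT2def]
      intro p hp
      rw [Set.mem_prod] at hp ⊢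
      exact ⟨hp.1.1, hp.2⟩
    · intro p hp
      obtain ⟨hpt, hpn⟩ := hp
      rw [Set.mem_prod] at hpt
      have hρpos : 0 < p.1 := hpt.1
      have hρr : r < p.1 := by
        by_contra h
        exact hpn (by rw [hT2def, Set.mem_prod]; exact ⟨⟨hρpos, not_lt.mp h⟩, hpt.2⟩)
      simp only [smul_eq_mul]
      have hnotin : c + Complex.polarCoord.symm p ∉ closedBall c r := by
        simp only [mem_closedBall, dist_eq_norm, add_sub_cancel_left]
        rw [habs_symm, abs_of_pos hρpos]
        exact not_le.mpr hρr
      rw [hgdef, Set.indicator_of_notMem hnotin, mul_zero]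
  have step5 : ∫ p in T2, H p = ∫ ρ in Ioc (0:ℝ) r, ∫ θ in Ioo (-π) π, H (ρ, θ) := by
    rw [hT2def, Measure.volume_eq_prod]
    apply setIntegral_prod
    rw [← Measure.volume_eq_prod, ← hT2def]
    exact hHi
  -- inner bound
  have hinner : ∀ ρ ∈ Ioc (0:ℝ) r,
      2 * π * ‖f c‖ * ρ ≤ ∫ θ in Ioo (-π) π, H (ρ, θ) := by
    intro ρ hρ
    have hval : ∀ θ : ℝ, H (ρ, θ) = ρ * ‖f (circleMap c ρ θ)‖ := by
      intro θ
      have hcm : c + Complex.polarCoord.symm (ρ, θ) = circleMap c ρ θ := by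
        rw [Complex.polarCoord_symm_apply, circleMap]
        congr 1
        rw [Complex.exp_mul_I]
        push_cast
        ring
      have hmem : circleMap c ρ θ ∈ closedBall c r := by
        simp only [mem_closedBall, dist_eq_norm]
        rw [circleMap_sub_center, norm_circleMap_zero, abs_of_pos hρ.1]
        exact hρ.2
      simp only [hHdef, smul_eq_mul]
      rw [hcm, hgdef, Set.indicator_of_mem hmem]
    calc 2 * π * ‖f c‖ * ρ = ρ * (2 * π * ‖f c‖) := by ring
      _ ≤ ρ * ∫ θ in (0:ℝ)..(2*π), ‖f (circleMap c ρ θ)‖ := by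
          apply mul_le_mul_of_nonneg_left _ hρ.1.le
          exact circle_bound hf hρ.1 hρ.2 hsub
      _ = ρ * ∫ θ in (-π)..π, ‖f (circleMap c ρ θ)‖ := by
          congr 1
          have hper : Function.Periodic
              (fun θ => ‖f (circleMap c ρ θ)‖) (2*π) :=
            (periodic_circleMap c ρ).comp fun z => ‖f z‖
          have := hper.intervalIntegral_add_eq (-π) 0
          rw [show -π + 2*π = π from by ring, show (0:ℝ) + 2*π = 2*π from by ring] at this
          exact this.symm
      _ = ∫ θ in Ioo (-π) π, H (ρ, θ) := by
          rw [intervalIntegral.integral_of_le (by linarith [Real.pi_pos]),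
            integral_Ioc_eq_integral_Ioo, ← integral_const_mul]
          apply setIntegral_congr_fun measurableSet_Ioo
          intro θ _
          exact (hval θ).symm
  -- outer bound
  have houter_int : IntegrableOn (fun ρ => ∫ θ in Ioo (-π) π, H (ρ, θ)) (Ioc (0:ℝ) r) := by
    have := hHi
    rw [hT2def, IntegrableOn, Measure.volume_eq_prod, ← Measure.prod_restrict] at this
    exact this.integral_prod_left
  calc π * r ^ 2 * ‖f c‖
      = ∫ ρ in Ioc (0:ℝ) r, 2 * π * ‖f c‖ * ρ := by
        rw [integral_const_mul, ← intervalIntegral.integral_of_le hr.le, integral_id]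
        ring
    _ ≤ ∫ ρ in Ioc (0:ℝ) r, ∫ θ in Ioo (-π) π, H (ρ, θ) := by
        apply setIntegral_mono_on _ houter_int measurableSet_Ioc hinner
        exact (continuous_const.mul continuous_id).integrableOn_Ioc
    _ = ∫ y in closedBall c r, ‖f y‖ := by
        rw [← step5, ← step4, ← step3, ← step2, ← step1]


/-- Pointwise interior gradient estimate for harmonic functions on an
annulus in terms of the weak-`L²` norm of the gradient, with the explicit universal
constant `(8/log 2)·√(3/π)`. -/
theorem statement16 (a b : ℝ) (ha : 0 < a) (hab : a < b) (u : ℂ → ℝ)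
    (hu : ContDiffOn ℝ 2 u (ann a b)) (hharm : ∀ z ∈ ann a b, lap u z = 0) :
    ∀ x : ℂ, 2 * a < ‖x‖ → ‖x‖ < b / 2 →
      ENNReal.ofReal (Real.sqrt (pd1 u x ^ 2 + pd2 u x ^ 2)) ≤
        ENNReal.ofReal (8 / Real.log 2 * Real.sqrt (3 / Real.pi) *
            (1 / ‖x‖)) *
          weakL2 (fun y => Real.sqrt (pd1 u y ^ 2 + pd2 u y ^ 2)) (ann a b) := by
  intro x hx1 hx2
  have hop := ann_open a b
  have hfd : DifferentiableOn ℂ (gradC u) (ann a b) := gradC_diffOn a b u hu hharm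
  have hfm : Measurable (gradC u) := by
    unfold gradC pd1 pd2
    exact (Complex.measurable_ofReal.comp (measurable_fderiv_apply_const ℝ u 1)).sub
      ((Complex.measurable_ofReal.comp
        (measurable_fderiv_apply_const ℝ u Complex.I)).mul_const Complex.I)
  have hxpos : 0 < ‖x‖ := lt_trans (by linarith : (0:ℝ) < 2 * a) hx1
  set r : ℝ := ‖x‖ / 2 with hrdef
  have hrpos : 0 < r := by positivity
  have hsub : closedBall x r ⊆ ann a b := by
    intro y hy
    rw [mem_closedBall, Complex.dist_eq] at hy
    have h := abs_norm_sub_norm_le y x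
    rw [abs_le] at h
    constructor
    · linarith [h.1, hy, hx1]
    · linarith [h.2, hy, hx2, hab, ha]
  have hMV := meanvalue hfd hfm hrpos hsub
  have hFrw : (fun y => Real.sqrt (pd1 u y ^ 2 + pd2 u y ^ 2))
      = fun y => ‖gradC u y‖ := funext fun y => (abs_gradC u y).symm
  rw [hFrw, ← abs_gradC u x]
  set W := weakL2 (fun y => ‖gradC u y‖) (ann a b) with hWdef
  have hlog2 : 0 < Real.log 2 := Real.log_pos one_lt_two
  have hCpos : 0 < 8 / Real.log 2 * Real.sqrt (3 / Real.pi) * (1 / ‖x‖) := by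
    apply mul_pos (mul_pos (by positivity) (Real.sqrt_pos.mpr (by positivity)))
    positivity
  rcases eq_or_ne W ⊤ with hWtop | hWtop
  · rw [hWtop, ENNReal.mul_top (by simp only [ne_eq, ENNReal.ofReal_eq_zero, not_le]; exact hCpos)]
    exact le_top
  have hVle : ∀ t : ℝ, 0 < t → ENNReal.ofReal t *
      (volume {y : ℂ | y ∈ ann a b ∧ t < ‖gradC u y‖}) ^ (1/2 : ℝ) ≤ W := by
    intro t ht
    rw [hWdef, weakL2]
    exact le_iSup₂ (f := fun (t : ℝ) (_ : 0 < t) => ENNReal.ofReal t *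
      (volume {y : ℂ | y ∈ ann a b ∧ t < ‖gradC u y‖}) ^ (1/2 : ℝ)) t ht
  have hFm : Measurable fun y => ‖gradC u y‖ :=
    hfm.norm
  have hslice_meas : ∀ t : ℝ, MeasurableSet {y : ℂ | t < ‖gradC u y‖} :=
    fun t => measurableSet_lt measurable_const hFm
  have hslice : ∀ t : ℝ, (volume.restrict (closedBall x r)) {y | t < ‖gradC u y‖}
      ≤ volume {y : ℂ | y ∈ ann a b ∧ t < ‖gradC u y‖} := by
    intro t
    rw [Measure.restrict_apply (hslice_meas t)]
    apply measure_mono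
    rintro y ⟨h1, h2⟩
    exact ⟨hsub h2, h1⟩
  have hFcont : ContinuousOn (fun y => ‖gradC u y‖) (closedBall x r) :=
    (hfd.mono hsub).continuousOn.norm
  have hFint : IntegrableOn (fun y => ‖gradC u y‖) (closedBall x r) :=
    hFcont.integrableOn_compact (isCompact_closedBall x r)
  have hstep0 : ENNReal.ofReal (Real.pi * r^2 * ‖gradC u x‖)
      ≤ ∫⁻ y in closedBall x r, ENNReal.ofReal (‖gradC u y‖) := by
    rw [← ofReal_integral_eq_lintegral_ofReal hFint
      (ae_of_all _ fun y => norm_nonneg _)]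
    exact ENNReal.ofReal_le_ofReal hMV
  have hlayer : ∫⁻ y in closedBall x r, ENNReal.ofReal (‖gradC u y‖)
      = ∫⁻ t in Ioi (0:ℝ), (volume.restrict (closedBall x r))
          {y | t < ‖gradC u y‖} :=
    lintegral_eq_lintegral_meas_lt _ (ae_of_all _ fun y => norm_nonneg _)
      hFm.aemeasurable
  rcases eq_or_ne W 0 with hW0 | hW0
  · -- degenerate case : W = 0
    have hzero : ∀ t ∈ Ioi (0:ℝ),
        (volume.restrict (closedBall x r)) {y | t < ‖gradC u y‖} = 0 := by
      intro t ht
      have h := hVle t ht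
      rw [hW0, nonpos_iff_eq_zero, mul_eq_zero] at h
      have hV : volume {y : ℂ | y ∈ ann a b ∧ t < ‖gradC u y‖} = 0 := by
        rcases h with h | h
        · exact absurd h (by simp only [ne_eq, ENNReal.ofReal_eq_zero, not_le]; exact ht)
        · rw [ENNReal.rpow_eq_zero_iff] at h
          rcases h with ⟨h, _⟩ | ⟨_, h⟩
          · exact h
          · norm_num at h
      exact le_antisymm ((hslice t).trans hV.le) zero_le
    have hzint : ∫⁻ t in Ioi (0:ℝ), (volume.restrict (closedBall x r))
        {y | t < ‖gradC u y‖} = 0 := by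
      rw [setLIntegral_congr_fun measurableSet_Ioi hzero]
      simp
    have hle0 : Real.pi * r^2 * ‖gradC u x‖ ≤ 0 := by
      have h := hstep0.trans (le_of_eq (hlayer.trans hzint))
      rwa [nonpos_iff_eq_zero, ENNReal.ofReal_eq_zero] at h
    have habs0 : ‖gradC u x‖ = 0 := by
      have hle : ‖gradC u x‖ ≤ 0 := by
        nlinarith [mul_pos Real.pi_pos (pow_pos hrpos 2)]
      exact le_antisymm hle (norm_nonneg _)
    rw [habs0]
    simp
  · -- main case : 0 < W < ⊤
    set W' := W.toReal with hW'def
    have hW'pos : 0 < W' := ENNReal.toReal_pos hW0 hWtop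
    have hWeq : W = ENNReal.ofReal W' := (ENNReal.ofReal_toReal hWtop).symm
    set sπ := Real.sqrt Real.pi with hsπdef
    have hsπpos : 0 < sπ := Real.sqrt_pos.mpr Real.pi_pos
    have hsπsq : sπ^2 = Real.pi := Real.sq_sqrt Real.pi_pos.le
    set T := W' / (sπ * r) with hTdef
    have hTpos : 0 < T := by positivity
    have hVbound : ∀ t : ℝ, 0 < t →
        volume {y : ℂ | y ∈ ann a b ∧ t < ‖gradC u y‖}
          ≤ ENNReal.ofReal (W'^2 / t^2) := by
      intro t ht
      have h := hVle t ht
      set V := volume {y : ℂ | y ∈ ann a b ∧ t < ‖gradC u y‖} with hVdef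
      have h2 : V ^ (1/2:ℝ) ≤ W / ENNReal.ofReal t := by
        rw [ENNReal.le_div_iff_mul_le
          (Or.inl (by simp only [ne_eq, ENNReal.ofReal_eq_zero, not_le]; exact ht))
          (Or.inl ENNReal.ofReal_ne_top), mul_comm]
        exact h
      have h3 : (V ^ (1/2:ℝ)) ^ (2:ℝ) ≤ (W / ENNReal.ofReal t) ^ (2:ℝ) :=
        ENNReal.rpow_le_rpow h2 (by norm_num)
      rw [← ENNReal.rpow_mul] at h3
      norm_num at h3
      calc V ≤ (W / ENNReal.ofReal t) ^ (2:ℕ) := h3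
        _ = ENNReal.ofReal ((W'/t)^2) := by
            rw [hWeq, ← ENNReal.ofReal_div_of_pos ht, ← ENNReal.ofReal_pow (by positivity)]
        _ = ENNReal.ofReal (W'^2 / t^2) := by rw [div_pow]
    have hsplit : ∫⁻ t in Ioi (0:ℝ), (volume.restrict (closedBall x r))
          {y | t < ‖gradC u y‖}
        = (∫⁻ t in Ioc (0:ℝ) T, (volume.restrict (closedBall x r))
            {y | t < ‖gradC u y‖})
          + ∫⁻ t in Ioi T, (volume.restrict (closedBall x r))
            {y | t < ‖gradC u y‖} := by
      rw [← Ioc_union_Ioi_eq_Ioi hTpos.le,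
        lintegral_union measurableSet_Ioi (Ioc_disjoint_Ioi le_rfl)]
    have hcb : volume (closedBall x r) = ENNReal.ofReal (Real.pi * r^2) := by
      rw [Complex.volume_closedBall]
      have hpi : ENNReal.ofReal Real.pi = (NNReal.pi : ENNReal) := by
        rw [← ENNReal.ofReal_coe_nnreal, NNReal.coe_real_pi]
      rw [← hpi, ← ENNReal.ofReal_pow hrpos.le, ← ENNReal.ofReal_mul (by positivity)]
      ring_nf
    have hpiece1 : ∫⁻ t in Ioc (0:ℝ) T, (volume.restrict (closedBall x r))
          {y | t < ‖gradC u y‖}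
        ≤ ENNReal.ofReal (Real.pi * r^2) * ENNReal.ofReal T := by
      calc ∫⁻ t in Ioc (0:ℝ) T, (volume.restrict (closedBall x r))
            {y | t < ‖gradC u y‖}
          ≤ ∫⁻ _t in Ioc (0:ℝ) T, ENNReal.ofReal (Real.pi * r^2) :=
            lintegral_mono fun t => le_trans (measure_mono (subset_univ _))
              (le_of_eq (by rw [Measure.restrict_apply_univ, hcb]))
        _ = ENNReal.ofReal (Real.pi * r^2) * ENNReal.ofReal T := by
            rw [setLIntegral_const, Real.volume_Ioc]
            norm_num
    have hfun : EqOn (fun t : ℝ => W'^2 * t ^ (-2:ℝ)) (fun t => W'^2 / t^2) (Ioi T) := by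
      intro t ht
      have ht0 : 0 < t := lt_trans hTpos ht
      simp only
      rw [Real.rpow_neg ht0.le, show ((2:ℝ)) = ((2:ℕ):ℝ) from by norm_num,
        Real.rpow_natCast]
      ring
    have hInt2 : IntegrableOn (fun t => W'^2 / t^2) (Ioi T) := by
      have hbase := (integrableOn_Ioi_rpow_of_lt (by norm_num : (-2:ℝ) < -1) hTpos)
      have h2 := hbase.const_mul (W'^2)
      exact h2.congr ((ae_restrict_iff' measurableSet_Ioi).mpr (ae_of_all _ fun t ht => hfun ht))
    have hintval : ∫ t in Ioi T, W'^2 / t^2 = W'^2 / T := by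
      have hcong : ∫ t in Ioi T, W'^2 / t^2 = ∫ t in Ioi T, W'^2 * t^(-2:ℝ) :=
        (setIntegral_congr_fun measurableSet_Ioi hfun).symm
      rw [hcong, integral_const_mul, integral_Ioi_rpow_of_lt (by norm_num) hTpos]
      rw [show (-2:ℝ) + 1 = -1 from by norm_num, Real.rpow_neg_one]
      field_simp
    have hpiece2 : ∫⁻ t in Ioi T, (volume.restrict (closedBall x r))
          {y | t < ‖gradC u y‖}
        ≤ ENNReal.ofReal (W'^2 / T) := by
      calc ∫⁻ t in Ioi T, (volume.restrict (closedBall x r))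
            {y | t < ‖gradC u y‖}
          ≤ ∫⁻ t in Ioi T, ENNReal.ofReal (W'^2 / t^2) := by
            apply setLIntegral_mono
              (ENNReal.measurable_ofReal.comp
                (measurable_const.div ((measurable_id.pow_const 2))))
            intro t ht
            exact (hslice t).trans (hVbound t (lt_trans hTpos ht))
        _ = ENNReal.ofReal (∫ t in Ioi T, W'^2 / t^2) := by
            rw [ofReal_integral_eq_lintegral_ofReal hInt2
              ((ae_restrict_iff' measurableSet_Ioi).mpr (ae_of_all _ fun t ht => by positivity))]
        _ ≤ ENNReal.ofReal (W'^2 / T) := by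
            rw [hintval]
    have htot : ∫⁻ t in Ioi (0:ℝ), (volume.restrict (closedBall x r))
          {y | t < ‖gradC u y‖} ≤ ENNReal.ofReal (2 * sπ * r * W') := by
      rw [hsplit]
      calc _ ≤ ENNReal.ofReal (Real.pi * r^2) * ENNReal.ofReal T
            + ENNReal.ofReal (W'^2 / T) := add_le_add hpiece1 hpiece2
        _ = ENNReal.ofReal (Real.pi * r^2 * T + W'^2 / T) := by
            rw [← ENNReal.ofReal_mul (by positivity),
              ← ENNReal.ofReal_add (by positivity) (by positivity)]
        _ = ENNReal.ofReal (2 * sπ * r * W') := by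
            congr 1
            rw [hTdef, ← hsπsq]
            field_simp
            ring
    have hreal : Real.pi * r^2 * ‖gradC u x‖ ≤ 2 * sπ * r * W' := by
      have h := (hstep0.trans (le_of_eq hlayer)).trans htot
      rwa [ENNReal.ofReal_le_ofReal_iff (by positivity)] at h
    have habs : ‖gradC u x‖ ≤ 4 / (sπ * ‖x‖) * W' := by
      rw [div_mul_eq_mul_div, le_div_iff₀ (by positivity)]
      rw [hrdef, ← hsπsq] at hreal
      nlinarith [hreal, mul_pos hsπpos hxpos, hW'pos, norm_nonneg (gradC u x)]
    calc ENNReal.ofReal (‖gradC u x‖)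
        ≤ ENNReal.ofReal (4 / (sπ * ‖x‖) * W') := ENNReal.ofReal_le_ofReal habs
      _ = ENNReal.ofReal (4 / (sπ * ‖x‖)) * W := by
          rw [ENNReal.ofReal_mul (by positivity), ← hWeq]
      _ ≤ ENNReal.ofReal (8 / Real.log 2 * Real.sqrt (3 / Real.pi) *
            (1 / ‖x‖)) * W := by
          apply mul_le_mul_left
          apply ENNReal.ofReal_le_ofReal
          have hsq3 : Real.sqrt (3 / Real.pi) = Real.sqrt 3 / sπ := by
            rw [hsπdef, Real.sqrt_div (by norm_num : (0:ℝ) ≤ 3)]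
          rw [hsq3, show 8 / Real.log 2 * (Real.sqrt 3 / sπ) * (1 / ‖x‖)
            = (8 / Real.log 2 * Real.sqrt 3) / (sπ * ‖x‖) from by ring]
          gcongr
          have hlog1 : Real.log 2 ≤ 1 := by
            have := Real.log_le_sub_one_of_pos (by norm_num : (0:ℝ) < 2)
            linarith
          have h8 : (8:ℝ) ≤ 8 / Real.log 2 := by
            rw [le_div_iff₀ hlog2]; nlinarith
          have hs3 : (1:ℝ) ≤ Real.sqrt 3 := by
            rw [show (1:ℝ) = Real.sqrt 1 from Real.sqrt_one.symm]
            exact Real.sqrt_le_sqrt (by norm_num)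
          nlinarith
end
end

section
/- For every real α > −1 and every real t > 0, one has 1 − (2α+3)²·(e^{−2(α+1)t} + e^{−2(α+2)t}) + 8(α+1)(α+2)·e^{−(2α+3)t} + e^{−2(2α+3)t} > 0. -/
lemma pos_of_hasDerivAt (f f' : ℝ → ℝ) (hd : ∀ x, HasDerivAt f (f' x) x)
    (h0 : f 0 = 0) (hp : ∀ x, 0 < x → 0 < f' x) {t : ℝ} (ht : 0 < t) : 0 < f t := by
  have hcont : ContinuousOn f (Set.Ici 0) :=
    fun x _ => ((hd x).continuousAt).continuousWithinAt
  have hmono : StrictMonoOn f (Set.Ici 0) := by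
    apply strictMonoOn_of_deriv_pos (convex_Ici 0) hcont
    intro x hx
    rw [interior_Ici] at hx
    rw [(hd x).deriv]
    exact hp x hx
  have := hmono Set.self_mem_Ici (Set.mem_Ici.2 ht.le) ht
  simpa [h0] using this

/-- Positivity of the quantity `Λ(α, t)` arising from the exact
evaluation of the second-moment double integral
`∫_a^b∫_a^b (r−s)² r^{2α+1} s^{2α+1} dr ds`. -/
theorem statement17 (α t : ℝ) (hα : -1 < α) (ht : 0 < t) :
    0 < 1 - (2 * α + 3) ^ 2 *
          (Real.exp (-2 * (α + 1) * t) + Real.exp (-2 * (α + 2) * t)) +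
        8 * (α + 1) * (α + 2) * Real.exp (-(2 * α + 3) * t) +
        Real.exp (-2 * (2 * α + 3) * t) := by
  have hm : (1:ℝ) < 2*α+3 := by linarith
  have hm0 : (0:ℝ) < 2*α+3 := by linarith
  have hp : (0:ℝ) < α+1 := by linarith
  have hq : (0:ℝ) < α+2 := by linarith
  -- derivative helpers
  have hexp : ∀ (c x : ℝ), HasDerivAt (fun y : ℝ => Real.exp (c*y)) (c * Real.exp (c*x)) x := by
    intro c x
    have := ((hasDerivAt_id x).const_mul c).exp
    simpa [mul_comm] using this
  have hexpneg : ∀ x : ℝ, HasDerivAt (fun y : ℝ => Real.exp (-y)) (-Real.exp (-x)) x := by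
    intro x
    have := (hasDerivAt_neg x).exp
    simpa [mul_comm] using this
  -- core inequality h > 0
  have hcore : ∀ x : ℝ, 0 < x →
      (2*α+3) * Real.exp (-(2*α+3)*x) < (α+1)*Real.exp x + (α+2)*Real.exp (-x) := by
    intro x hx
    have h1 : Real.exp (-(2*α+3)*x) < Real.exp (-(x/(2*α+3))) := by
      apply Real.exp_lt_exp.2
      have hx1 : x/(2*α+3) < (2*α+3)*x := by
        rw [div_lt_iff₀ hm0]
        nlinarith [mul_pos (mul_pos (sub_pos.2 hm) hx) (by linarith : (0:ℝ) < 2*α+3+1)]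
      linarith
    have hc := convexOn_exp.2 (Set.mem_univ x) (Set.mem_univ (-x))
      (le_of_lt (div_pos hp hm0)) (le_of_lt (div_pos hq hm0))
      (by rw [← add_div, div_eq_one_iff_eq hm0.ne']; ring : (α+1)/(2*α+3) + (α+2)/(2*α+3) = 1)
    simp only [smul_eq_mul] at hc
    rw [show (α+1)/(2*α+3) * x + (α+2)/(2*α+3) * (-x) = -(x/(2*α+3)) by
      field_simp <;> ring] at hc
    have h2 := mul_le_mul_of_nonneg_left hc hm0.le
    rw [show (2*α+3) * ((α+1)/(2*α+3) * Real.exp x + (α+2)/(2*α+3) * Real.exp (-x))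
        = (α+1)*Real.exp x + (α+2)*Real.exp (-x) by field_simp <;> ring] at h2
    calc (2*α+3) * Real.exp (-(2*α+3)*x) < (2*α+3) * Real.exp (-(x/(2*α+3))) :=
          (mul_lt_mul_iff_right₀ hm0).2 h1
      _ ≤ _ := h2
  -- k > 0
  have hk : ∀ x : ℝ, 0 < x →
      0 < (α+1)*Real.exp x - (α+2)*Real.exp (-x) + Real.exp (-(2*α+3)*x) := by
    intro x hx
    apply pos_of_hasDerivAt
      (fun y => (α+1)*Real.exp y - (α+2)*Real.exp (-y) + Real.exp (-(2*α+3)*y))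
      (fun y => (α+1)*Real.exp y + (α+2)*Real.exp (-y) + (-(2*α+3)) * Real.exp (-(2*α+3)*y))
      ?_ ?_ ?_ hx
    · intro y
      have H := (((Real.hasDerivAt_exp y).const_mul (α+1)).sub
        ((hexpneg y).const_mul (α+2))).add (hexp (-(2*α+3)) y)
      refine H.congr_deriv ?_
      ring
    · norm_num
    · intro y hy
      nlinarith [hcore y hy]
  -- g > 0
  have hg : ∀ x : ℝ, 0 < x →
      0 < (2*α+3)*((α+1)*Real.exp x + (α+2)*Real.exp (-x)) - 4*(α+1)*(α+2)
          - Real.exp (-(2*α+3)*x) := by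
    intro x hx
    apply pos_of_hasDerivAt
      (fun y => (2*α+3)*((α+1)*Real.exp y + (α+2)*Real.exp (-y)) - 4*(α+1)*(α+2)
          - Real.exp (-(2*α+3)*y))
      (fun y => (2*α+3)*((α+1)*Real.exp y - (α+2)*Real.exp (-y) + Real.exp (-(2*α+3)*y)))
      ?_ ?_ ?_ hx
    · intro y
      have H := (((((Real.hasDerivAt_exp y).const_mul (α+1)).add
        ((hexpneg y).const_mul (α+2))).const_mul (2*α+3)).sub_const
        (4*(α+1)*(α+2))).sub (hexp (-(2*α+3)) y)
      refine H.congr_deriv ?_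
      ring
    · simp only [Real.exp_zero, mul_zero, neg_zero]
      ring
    · intro y hy
      exact mul_pos hm0 (hk y hy)
  -- F > 0
  apply pos_of_hasDerivAt
    (fun y => 1 - (2 * α + 3) ^ 2 *
          (Real.exp (-2 * (α + 1) * y) + Real.exp (-2 * (α + 2) * y)) +
        8 * (α + 1) * (α + 2) * Real.exp (-(2 * α + 3) * y) +
        Real.exp (-2 * (2 * α + 3) * y))
    (fun y => 2*(2*α+3)*Real.exp (-(2*α+3)*y) *
        ((2*α+3)*((α+1)*Real.exp y + (α+2)*Real.exp (-y)) - 4*(α+1)*(α+2)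
          - Real.exp (-(2*α+3)*y)))
    ?_ ?_ ?_ ht
  · intro y
    have H := ((((hexp (-2*(α+1)) y).add (hexp (-2*(α+2)) y)).const_mul
        ((2*α+3)^2)).const_sub 1).add
      (((hexp (-(2*α+3)) y).const_mul (8*(α+1)*(α+2))).add (hexp (-2*(2*α+3)) y))
    have e1 : Real.exp (-2*(α+1)*y) = Real.exp (-(2*α+3)*y) * Real.exp y := by
      rw [← Real.exp_add]; congr 1; ring
    have e2 : Real.exp (-2*(α+2)*y) = Real.exp (-(2*α+3)*y) * Real.exp (-y) := by
      rw [← Real.exp_add]; congr 1; ring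
    have e4 : Real.exp (-2*(2*α+3)*y) = Real.exp (-(2*α+3)*y) * Real.exp (-(2*α+3)*y) := by
      rw [← Real.exp_add]; congr 1; ring
    have H2 : HasDerivAt (fun y => 1 - (2 * α + 3) ^ 2 *
          (Real.exp (-2 * (α + 1) * y) + Real.exp (-2 * (α + 2) * y)) +
        8 * (α + 1) * (α + 2) * Real.exp (-(2 * α + 3) * y) +
        Real.exp (-2 * (2 * α + 3) * y))
        (-((2*α+3)^2 * (-2*(α+1) * Real.exp (-2*(α+1)*y) + -2*(α+2) * Real.exp (-2*(α+2)*y)))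
          + (8*(α+1)*(α+2) * (-(2*α+3) * Real.exp (-(2*α+3)*y))
            + -2*(2*α+3) * Real.exp (-2*(2*α+3)*y))) y := by
      exact H.congr_of_eventuallyEq (Filter.Eventually.of_forall fun z => by simp only [Pi.add_apply]; ring)
    convert H2 using 1
    rw [e1, e2, e4]; ring
  · simp only [mul_zero, neg_zero, Real.exp_zero]
    ring
  · intro y hy
    exact mul_pos (mul_pos (by linarith) (Real.exp_pos _)) (hg y hy)
end

section
/- Let α₁ > −1 and α₂ > −1 be real numbers, let n be a nonzero integer, let 𝔞₁, 𝔞₂ ∈ ℂ, and let 0 < a < b. Define f on ℂ \ {0} by f(z) = Re( (𝔞₁·|z|^{α₁} + 𝔞₂·|z|^{α₂})·(z/|z|)ⁿ ). Then, with Ω = {z ∈ ℂ : a < |z| < b}, one has ∫_Ω f(z)² dz = π·( (|𝔞₁|²/(2(α₁+1)))·b^{2(α₁+1)}·(1 − (a/b)^{2(α₁+1)}) + (|𝔞₂|²/(2(α₂+1)))·b^{2(α₂+1)}·(1 − (a/b)^{2(α₂+1)}) + (2·Re(𝔞₁·conj(𝔞₂))/(α₁+α₂+2))·b^{α₁+α₂+2}·(1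 − (a/b)^{α₁+α₂+2}) ). -/
open MeasureTheory

noncomputable section

open Real

lemma thetaInt (n : ℤ) (hn : n ≠ 0) (x y : ℝ) :
    ∫ θ in (-π)..π, (x * Real.cos (n*θ) - y * Real.sin (n*θ))^2 = π * (x^2 + y^2) := by
  have hc : (n:ℝ) ≠ 0 := Int.cast_ne_zero.mpr hn
  have hs : Real.sin ((n:ℝ)*π) = 0 := Real.sin_int_mul_pi n
  have hs' : Real.sin ((n:ℝ)*(-π)) = 0 := by rw [mul_neg, Real.sin_neg, hs, neg_zero]
  have key : ∀ θ : ℝ, (x * Real.cos (n*θ) - y * Real.sin (n*θ))^2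
      = x^2 * (Real.cos ((n:ℝ)*θ))^2 + y^2 * (Real.sin ((n:ℝ)*θ))^2
        - 2*x*y * (Real.sin ((n:ℝ)*θ) * Real.cos ((n:ℝ)*θ)) := by intro θ; ring
  simp_rw [key]
  have i1 : IntervalIntegrable (fun θ => x^2 * (Real.cos ((n:ℝ)*θ))^2) volume (-π) π :=
    (Continuous.intervalIntegrable (by fun_prop) _ _)
  have i2 : IntervalIntegrable (fun θ => y^2 * (Real.sin ((n:ℝ)*θ))^2) volume (-π) π :=
    (Continuous.intervalIntegrable (by fun_prop) _ _)
  have i3 : IntervalIntegrable (fun θ => 2*x*y * (Real.sin ((n:ℝ)*θ) * Real.cos ((n:ℝ)*θ))) volume (-π) π :=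
    (Continuous.intervalIntegrable (by fun_prop) _ _)
  rw [intervalIntegral.integral_sub (i1.add i2) i3, intervalIntegral.integral_add i1 i2]
  rw [intervalIntegral.integral_const_mul, intervalIntegral.integral_const_mul,
    intervalIntegral.integral_const_mul]
  have h1 : ∫ θ in (-π)..π, (Real.cos ((n:ℝ)*θ))^2 = π := by
    rw [intervalIntegral.integral_comp_mul_left (fun u => (Real.cos u)^2) hc,
      integral_cos_sq]
    simp [hs, hs']
    field_simp
  have h2 : ∫ θ in (-π)..π, (Real.sin ((n:ℝ)*θ))^2 = π := by
    rw [intervalIntegral.integral_comp_mul_left (fun u => (Real.sin u)^2) hc,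
      integral_sin_sq]
    simp [hs, hs']
    field_simp
  have h3 : ∫ θ in (-π)..π, Real.sin ((n:ℝ)*θ) * Real.cos ((n:ℝ)*θ) = 0 := by
    rw [intervalIntegral.integral_comp_mul_left (fun u => Real.sin u * Real.cos u) hc,
      integral_sin_mul_cos₁]
    simp [hs, hs']
  rw [h1, h2, h3]
  ring

lemma bterm (a b q : ℝ) (ha : 0 < a) (hb : 0 < b) :
    b ^ q * (1 - (a/b)^q) = b^q - a^q := by
  rw [Real.div_rpow ha.le hb.le, mul_sub, mul_one,
    mul_div_cancel₀ _ (Real.rpow_pos_of_pos hb q).ne']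

/-- Exact evaluation of `∫_Ω (Re((𝔞₁|z|^{α₁} + 𝔞₂|z|^{α₂})(z/|z|)ⁿ))²`
over the annulus, for a nonzero Fourier mode `n`. -/
theorem statement19 (α₁ α₂ : ℝ) (hα₁ : -1 < α₁) (hα₂ : -1 < α₂) (n : ℤ) (hn : n ≠ 0)
    (a₁ a₂ : ℂ) (a b : ℝ) (ha : 0 < a) (hab : a < b) :
    (∫ z in ann a b,
        ((a₁ * (‖z‖ ^ α₁ : ℝ) + a₂ * (‖z‖ ^ α₂ : ℝ)) *
            (z / (‖z‖ : ℝ)) ^ n).re ^ 2) =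
      Real.pi *
        (‖a₁‖ ^ 2 / (2 * (α₁ + 1)) * b ^ (2 * (α₁ + 1)) *
            (1 - (a / b) ^ (2 * (α₁ + 1))) +
          ‖a₂‖ ^ 2 / (2 * (α₂ + 1)) * b ^ (2 * (α₂ + 1)) *
            (1 - (a / b) ^ (2 * (α₂ + 1))) +
          2 * (a₁ * (starRingEnd ℂ) a₂).re / (α₁ + α₂ + 2) * b ^ (α₁ + α₂ + 2) *
            (1 - (a / b) ^ (α₁ + α₂ + 2))) := by
  have hb : 0 < b := ha.trans hab
  have hπ := Real.pi_pos
  set F : ℂ → ℝ := fun z =>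
    ((a₁ * (‖z‖ ^ α₁ : ℝ) + a₂ * (‖z‖ ^ α₂ : ℝ)) *
      (z / (‖z‖ : ℝ)) ^ n).re ^ 2 with hF
  set c : ℝ → ℂ := fun r => a₁ * ((r ^ α₁ : ℝ) : ℂ) + a₂ * ((r ^ α₂ : ℝ) : ℂ) with hcdef
  set H : ℝ × ℝ → ℝ := fun p =>
    p.1 * ((c p.1).re * Real.cos (n * p.2) - (c p.1).im * Real.sin (n * p.2))^2 with hHdef
  set S : Set (ℝ × ℝ) := Set.Ioo a b ×ˢ Set.Ioo (-π) π with hSdef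
  -- pointwise identity
  have hpt : ∀ p : ℝ × ℝ, 0 < p.1 → p.1 * F (Complex.polarCoord.symm p) = H p := by
    intro p hp
    have habs : ‖Complex.polarCoord.symm p‖ = p.1 := by
      rw [Complex.norm_polarCoord_symm, abs_of_pos hp]
    have hdiv : Complex.polarCoord.symm p / ((p.1 : ℝ) : ℂ)
        = Complex.exp (p.2 * Complex.I) := by
      rw [Complex.polarCoord_symm_apply, Complex.exp_mul_I,
        mul_div_cancel_left₀ _ (by exact_mod_cast hp.ne'),
        Complex.ofReal_cos, Complex.ofReal_sin]
    have hmul : (n : ℂ) * ((p.2 : ℂ) * Complex.I) = (((n : ℝ) * p.2 : ℝ) : ℂ) * Complex.I := by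
      push_cast; ring
    simp only [hF, hHdef]
    rw [habs, hdiv, ← Complex.exp_int_mul, hmul, Complex.exp_mul_I,
      ← Complex.ofReal_cos, ← Complex.ofReal_sin]
    have hre : ((c p.1) * (↑(Real.cos ((n:ℝ)*p.2)) + ↑(Real.sin ((n:ℝ)*p.2)) * Complex.I)).re
        = (c p.1).re * Real.cos ((n:ℝ)*p.2) - (c p.1).im * Real.sin ((n:ℝ)*p.2) := by
      simp only [Complex.mul_re, Complex.add_re, Complex.add_im, Complex.mul_I_re,
        Complex.mul_I_im, Complex.ofReal_re, Complex.ofReal_im, Complex.I_re, Complex.I_im]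
      ring
    rw [show (a₁*((p.1^α₁:ℝ):ℂ)+a₂*((p.1^α₂:ℝ):ℂ)) = c p.1 from rfl, hre]
  -- measurability of annulus
  have hann_meas : MeasurableSet (ann a b) :=
    ((isOpen_Ioo.preimage continuous_norm) :
      IsOpen ((fun z : ℂ => ‖z‖) ⁻¹' Set.Ioo a b)).measurableSet
  have hSsub : S ⊆ polarCoord.target := by
    rintro ⟨r, θ⟩ ⟨hr, hθ⟩
    exact ⟨ha.trans hr.1, hθ⟩
  -- change to polar coordinates
  rw [show (∫ z in ann a b, F z) = ∫ z, Set.indicator (ann a b) F z from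
    (integral_indicator hann_meas).symm, ← Complex.integral_comp_polarCoord_symm]
  have hcong : ∀ p ∈ polarCoord.target,
      p.1 • Set.indicator (ann a b) F (Complex.polarCoord.symm p) = Set.indicator S H p := by
    rintro ⟨r, θ⟩ ⟨hr, hθ⟩
    simp only [Set.mem_Ioi] at hr
    have habs : ‖Complex.polarCoord.symm (r, θ)‖ = r := by
      rw [Complex.norm_polarCoord_symm, abs_of_pos hr]
    by_cases hmem : (r, θ) ∈ S
    · have hin : Complex.polarCoord.symm (r, θ) ∈ ann a b := by
        refine ⟨?_, ?_⟩ <;> rw [habs]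
        · exact hmem.1.1
        · exact hmem.1.2
      rw [Set.indicator_of_mem hmem, Set.indicator_of_mem hin]
      exact hpt (r, θ) hr
    · have hnot : Complex.polarCoord.symm (r, θ) ∉ ann a b := by
        intro hin
        refine hmem ⟨⟨?_, ?_⟩, hθ⟩ <;> rw [← habs]
        · exact hin.1
        · exact hin.2
      rw [Set.indicator_of_notMem hmem, Set.indicator_of_notMem hnot, smul_zero]
  rw [setIntegral_congr_fun polarCoord.open_target.measurableSet hcong,
    setIntegral_indicator (measurableSet_Ioo.prod measurableSet_Ioo),
    Set.inter_eq_self_of_subset_right hSsub]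
  -- continuity / integrability of H
  have hc_cont : ContinuousOn c (Set.Ici a) := by
    have hr : ∀ q : ℝ, ContinuousOn (fun r : ℝ => ((r ^ q : ℝ) : ℂ)) (Set.Ici a) := by
      intro q
      apply Complex.continuous_ofReal.comp_continuousOn
      intro r hr
      exact (Real.continuousAt_rpow_const r q
        (Or.inl (ha.trans_le hr).ne')).continuousWithinAt
    exact (continuousOn_const.mul (hr α₁)).add (continuousOn_const.mul (hr α₂))
  have hH_cont : ContinuousOn H (Set.Icc a b ×ˢ Set.Icc (-π) π) := by
    have h1 : ContinuousOn (fun p : ℝ × ℝ => c p.1) (Set.Icc a b ×ˢ Set.Icc (-π) π) :=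
      hc_cont.comp continuous_fst.continuousOn (fun p hp => hp.1.1)
    apply ContinuousOn.mul continuous_fst.continuousOn
    apply ContinuousOn.pow
    exact ((Complex.continuous_re.comp_continuousOn h1).mul
        (Continuous.continuousOn (by fun_prop))).sub
      ((Complex.continuous_im.comp_continuousOn h1).mul
        (Continuous.continuousOn (by fun_prop)))
  have hint : IntegrableOn H S := by
    refine ((hH_cont.integrableOn_compact (isCompact_Icc.prod isCompact_Icc)).mono_set ?_)
    exact Set.prod_mono Set.Ioo_subset_Icc_self Set.Ioo_subset_Icc_self
  rw [MeasureTheory.Measure.volume_eq_prod] at hint ⊢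
  rw [setIntegral_prod _ hint]
  -- inner θ-integral
  have inner : ∀ r ∈ Set.Ioo a b,
      (∫ θ in Set.Ioo (-π) π, H (r, θ)) = π * (‖a₁‖ ^ 2 * r ^ (2*α₁+1)
        + ‖a₂‖ ^ 2 * r ^ (2*α₂+1)
        + 2 * (a₁ * (starRingEnd ℂ) a₂).re * r ^ (α₁+α₂+1)) := by
    intro r hr
    have hr0 : 0 < r := ha.trans hr.1
    have step1 : (∫ θ in Set.Ioo (-π) π, H (r, θ)) = ∫ θ in (-π)..π, H (r, θ) := by
      rw [intervalIntegral.integral_of_le (by linarith), integral_Ioc_eq_integral_Ioo]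
    rw [step1]
    simp only [hHdef]
    rw [intervalIntegral.integral_const_mul, thetaInt n hn]
    -- now algebra: r * (π * ((c r).re^2 + (c r).im^2)) = …
    have hnormsq : (c r).re^2 + (c r).im^2 = Complex.normSq (c r) := by
      rw [Complex.normSq_apply]; ring
    rw [hnormsq, hcdef]
    simp only
    rw [Complex.normSq_add, Complex.normSq_mul, Complex.normSq_mul,
      Complex.normSq_ofReal, Complex.normSq_ofReal]
    have hcross : (a₁ * ((r^α₁:ℝ):ℂ) * (starRingEnd ℂ) (a₂ * ((r^α₂:ℝ):ℂ))).re
        = (a₁ * (starRingEnd ℂ) a₂).re * (r^α₁ * r^α₂) := by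
      rw [map_mul, Complex.conj_ofReal,
        show a₁ * ((r^α₁:ℝ):ℂ) * ((starRingEnd ℂ) a₂ * ((r^α₂:ℝ):ℂ))
          = (a₁ * (starRingEnd ℂ) a₂) * (((r^α₁ * r^α₂ : ℝ)):ℂ) by push_cast; ring]
      simp [Complex.mul_re]
    rw [hcross]
    have e : ∀ s t : ℝ, r ^ s * r ^ t = r ^ (s+t) := fun s t => (Real.rpow_add hr0 s t).symm
    have e1 : r ^ (2*α₁+1) = r^α₁ * r^α₁ * r := by
      rw [show 2*α₁+1 = (α₁+α₁)+1 by ring, ← e, ← e, Real.rpow_one]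
    have e2 : r ^ (2*α₂+1) = r^α₂ * r^α₂ * r := by
      rw [show 2*α₂+1 = (α₂+α₂)+1 by ring, ← e, ← e, Real.rpow_one]
    have e3 : r ^ (α₁+α₂+1) = r^α₁ * r^α₂ * r := by
      rw [← e, ← e, Real.rpow_one]
    rw [e1, e2, e3]
    rw [Complex.normSq_eq_norm_sq, Complex.normSq_eq_norm_sq]
    ring
  rw [setIntegral_congr_fun measurableSet_Ioo inner]
  -- outer r-integral
  have step2 : (∫ r in Set.Ioo a b, π * (‖a₁‖ ^ 2 * r ^ (2*α₁+1)
        + ‖a₂‖ ^ 2 * r ^ (2*α₂+1)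
        + 2 * (a₁ * (starRingEnd ℂ) a₂).re * r ^ (α₁+α₂+1)))
      = ∫ r in a..b, π * (‖a₁‖ ^ 2 * r ^ (2*α₁+1)
        + ‖a₂‖ ^ 2 * r ^ (2*α₂+1)
        + 2 * (a₁ * (starRingEnd ℂ) a₂).re * r ^ (α₁+α₂+1)) := by
    rw [intervalIntegral.integral_of_le hab.le, integral_Ioc_eq_integral_Ioo]
  rw [step2, intervalIntegral.integral_const_mul]
  have j1 : IntervalIntegrable (fun r : ℝ => ‖a₁‖ ^ 2 * r ^ (2*α₁+1)) volume a b :=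
    (intervalIntegral.intervalIntegrable_rpow' (by linarith)).const_mul _
  have j2 : IntervalIntegrable (fun r : ℝ => ‖a₂‖ ^ 2 * r ^ (2*α₂+1)) volume a b :=
    (intervalIntegral.intervalIntegrable_rpow' (by linarith)).const_mul _
  have j3 : IntervalIntegrable
      (fun r : ℝ => 2 * (a₁ * (starRingEnd ℂ) a₂).re * r ^ (α₁+α₂+1)) volume a b :=
    (intervalIntegral.intervalIntegrable_rpow' (by linarith)).const_mul _
  rw [intervalIntegral.integral_add (j1.add j2) j3, intervalIntegral.integral_add j1 j2,
    intervalIntegral.integral_const_mul, intervalIntegral.integral_const_mul,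
    intervalIntegral.integral_const_mul,
    integral_rpow (Or.inl (by linarith : (-1:ℝ) < 2*α₁+1)),
    integral_rpow (Or.inl (by linarith : (-1:ℝ) < 2*α₂+1)),
    integral_rpow (Or.inl (by linarith : (-1:ℝ) < α₁+α₂+1))]
  rw [show 2*α₁+1+1 = 2*(α₁+1) by ring, show 2*α₂+1+1 = 2*(α₂+1) by ring,
    show α₁+α₂+1+1 = α₁+α₂+2 by ring]
  rw [Real.div_rpow ha.le hb.le, Real.div_rpow ha.le hb.le, Real.div_rpow ha.le hb.le]
  have d1 : (2*(α₁+1)) ≠ 0 := (by linarith : (0:ℝ) < 2*(α₁+1)).ne'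
  have d2 : (2*(α₂+1)) ≠ 0 := (by linarith : (0:ℝ) < 2*(α₂+1)).ne'
  have d3 : (α₁+α₂+2) ≠ 0 := (by linarith : (0:ℝ) < α₁+α₂+2).ne'
  have p1 : b ^ (2*(α₁+1)) ≠ 0 := (Real.rpow_pos_of_pos hb _).ne'
  have p2 : b ^ (2*(α₂+1)) ≠ 0 := (Real.rpow_pos_of_pos hb _).ne'
  have p3 : b ^ (α₁+α₂+2) ≠ 0 := (Real.rpow_pos_of_pos hb _).ne'
  field_simp
end
end
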